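/- arXiv:1910.14387 — 4 statements merged into one kernel-verified Lean document; each statement's English description precedes it below -/
import Mathlib

section
/- Let TS be a reversible labelled transition system whose label set has exactly two elements. Then TS is solvable by a choice-free Petri net system if and only if TS is solvable by a weighted marked graph system. -/
/-- A labelled transition system with initial state. -/
structure LTS (S L : Type) where
  tr : S → L → S → Prop
  init : S

namespace LTS

/-- Reachability between states of an LTS (directed paths of arcs). -/
def reach {S L : Type} (A : LTS S L) : S → S → Prop :=
  Relation.ReflTransGen (fun s s' => ∃ t, A.tr s t s')

/-- An LTS is reversible if every state is reachable from the initial state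
and the initial state is reachable from every state. -/
def reversible {S L : Type} (A : LTS S L) : Prop :=
  ∀ s : S, A.reach A.init s ∧ A.reach s A.init

end LTS

/-- Isomorphism of labelled transition systems. -/
def ltsIso {S1 S2 L : Type} (A : LTS S1 L) (B : LTS S2 L) : Prop :=
  ∃ ζ : S1 ≃ S2, ζ A.init = B.init ∧ ∀ s t s', A.tr s t s' ↔ B.tr (ζ s) t (ζ s')

/-- A weighted Petri net with places `P` and transitions `T`:
`pre p t` is the weight of the arc from `p` to `t`, `post t p` of the arc from `t` to `p`. -/
structure PetriNet (P T : Type) where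
  pre : P → T → ℕ
  post : T → P → ℕ

namespace PetriNet

variable {P T : Type}

/-- A transition `t` is enabled at marking `M`. -/
def enabled (N : PetriNet P T) (M : P → ℕ) (t : T) : Prop :=
  ∀ p, N.pre p t ≤ M p

/-- A place `p` is enabled by a marking `M`. -/
def placeEnabled (N : PetriNet P T) (M : P → ℕ) (p : P) : Prop :=
  ∀ t, N.pre p t ≤ M p

/-- The marking obtained by firing `t` at `M`. -/
def fire (N : PetriNet P T) (M : P → ℕ) (t : T) : P → ℕ :=
  fun p => M p - N.pre p t + N.post t p

/-- `M [t⟩ M'`. -/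
def step (N : PetriNet P T) (M : P → ℕ) (t : T) (M' : P → ℕ) : Prop :=
  N.enabled M t ∧ M' = N.fire M t

/-- A marking `M'` is reachable from `M` by a finite sequence of firings. -/
def Reach (N : PetriNet P T) (M M' : P → ℕ) : Prop :=
  Relation.ReflTransGen (fun M1 M2 => ∃ t, N.step M1 t M2) M M'

/-- A sequence of transitions is firable from a marking. -/
def firable (N : PetriNet P T) : (P → ℕ) → List T → Prop
  | _, [] => True
  | M, t :: σ => N.enabled M t ∧ N.firable (N.fire M t) σ

/-- The marking reached after firing a sequence of transitions. -/
def fireSeq (N : PetriNet P T) : (P → ℕ) → List T → (P → ℕ)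
  | M, [] => M
  | M, t :: σ => N.fireSeq (N.fire M t) σ

/-- A net is choice-free if every place has at most one output transition. -/
def choiceFree (N : PetriNet P T) : Prop :=
  ∀ p t t', 0 < N.pre p t → 0 < N.pre p t' → t = t'

/-- A weighted marked graph: each place has at most one output and at most one input transition. -/
def wmg (N : PetriNet P T) : Prop :=
  N.choiceFree ∧ ∀ p t t', 0 < N.post t p → 0 < N.post t' p → t = t'

/-- A net is pure if no place is a side condition of some transition. -/
def isPure (N : PetriNet P T) : Prop :=
  ∀ p t, ¬(0 < N.pre p t ∧ 0 < N.post t p)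

/-- Liveness: from every reachable marking, every transition can eventually fire again. -/
def live (N : PetriNet P T) (M0 : P → ℕ) : Prop :=
  ∀ (t : T) (M : P → ℕ), N.Reach M0 M → ∃ M', N.Reach M M' ∧ N.enabled M' t

/-- The reachability graph of a system, as an LTS on the reachable markings. -/
def RG (N : PetriNet P T) (M0 : P → ℕ) : LTS {M : P → ℕ // N.Reach M0 M} T where
  tr := fun M t M' => N.step M.1 t M'.1
  init := ⟨M0, Relation.ReflTransGen.refl⟩

end PetriNet

/-- A system solves an LTS if its reachability graph is isomorphic to it. -/
def Solves {Pl T S : Type} (N : PetriNet Pl T) (M0 : Pl → ℕ) (A : LTS S T) : Prop :=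
  ltsIso (N.RG M0) A

/-- CF-solvability of an LTS. -/
def CFSolvable {S L : Type} (A : LTS S L) : Prop :=
  ∃ (k : ℕ) (N : PetriNet (Fin k) L) (M0 : Fin k → ℕ), N.choiceFree ∧ Solves N M0 A

/-- WMG-solvability of an LTS. -/
def WMGSolvable {S L : Type} (A : LTS S L) : Prop :=
  ∃ (k : ℕ) (N : PetriNet (Fin k) L) (M0 : Fin k → ℕ), N.wmg ∧ Solves N M0 A

/-- Solvability of an LTS by a pure choice-free system. -/
def PureCFSolvable {S L : Type} (A : LTS S L) : Prop :=
  ∃ (k : ℕ) (N : PetriNet (Fin k) L) (M0 : Fin k → ℕ),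
    N.choiceFree ∧ N.isPure ∧ Solves N M0 A

/-- The circular LTS induced by a (nonempty) word `w`. -/
def circLTS {L : Type} (w : List L) (hw : 0 < w.length) : LTS (Fin w.length) L where
  tr := fun s t s' => t = w.get s ∧ s'.val = (s.val + 1) % w.length
  init := ⟨0, hw⟩

/-- The Parikh vector of a word. -/
def parikh {L : Type} [DecidableEq L] (w : List L) (t : L) : ℕ := w.count t

/-- A vector of naturals is prime if the gcd of its components equals 1. -/
def primeVec {L : Type} [Fintype L] (Υ : L → ℕ) : Prop := Finset.univ.gcd Υ = 1

/-- A word is cyclically solvable by a WMG. -/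
def cyclicWMGSolvable {L : Type} (w : List L) : Prop :=
  ∃ (hw : 0 < w.length) (k : ℕ) (N : PetriNet (Fin k) L) (M0 : Fin k → ℕ),
    N.wmg ∧ Solves N M0 (circLTS w hw)

/-- A word is cyclically solvable by a CF net. -/
def cyclicCFSolvable {L : Type} (w : List L) : Prop :=
  ∃ (hw : 0 < w.length) (k : ℕ) (N : PetriNet (Fin k) L) (M0 : Fin k → ℕ),
    N.choiceFree ∧ Solves N M0 (circLTS w hw)

/-- A circuit net: places `p_0 … p_{k-1}` and transitions `τ 0 … τ (k-1)` arranged in a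
single alternating cycle, `τ i` being the unique output of `p_i` and the unique input
of `p_{i+1 mod k}`. -/
def isCircuit {k : ℕ} {L : Type} (hk : 0 < k) (N : PetriNet (Fin k) L) : Prop :=
  ∃ τ : Fin k ≃ L,
    (∀ (i : Fin k) (t : L), 0 < N.pre i t ↔ t = τ i) ∧
    (∀ (i : Fin k) (t : L), 0 < N.post t i ↔ t = τ ⟨(i.val + k - 1) % k, Nat.mod_lt _ hk⟩)

/-- A word is cyclically solvable by a circuit system. -/
def cyclicCircuitSolvable {L : Type} (v : List L) : Prop :=
  ∃ (hv : 0 < v.length) (k : ℕ) (hk : 0 < k) (N : PetriNet (Fin k) L) (M0 : Fin k → ℕ),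
    isCircuit hk N ∧ Solves N M0 (circLTS v hv)

/-- The ordered pair `a b` is circularly adjacent in `w`. -/
def cAdj {L : Type} (w : List L) (a b : L) : Prop :=
  a ≠ b ∧ ((∃ w1 w2, w = w1 ++ a :: b :: w2) ∨ ∃ w3, w = b :: w3 ++ [a])

/-- The projection of a word on a two-element sub-alphabet, as a word over that sub-alphabet. -/
def projPair {L : Type} [DecidableEq L] (w : List L) (a b : L) :
    List {x : L // x = a ∨ x = b} :=
  w.filterMap (fun x => if h : x = a ∨ x = b then some ⟨x, h⟩ else none)

/-- The Parikh vector `P_jq` of the segment of `w` read circularly from state `s_j`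
to state `s_q` (empty when `j = q`). -/
def segParikh {L : Type} [DecidableEq L] (w : List L) (hw : 0 < w.length)
    (j q : Fin w.length) (t : L) : ℕ :=
  ((List.range ((q.val + w.length - j.val) % w.length)).map
    (fun i => w.get ⟨(j.val + i) % w.length, Nat.mod_lt _ hw⟩)).count t

/-- A region of an LTS. -/
def isRegion {S L : Type} (A : LTS S L) (R : S → ℕ) (B F : L → ℕ) : Prop :=
  ∀ s t s', A.tr s t s' → B t ≤ R s ∧ R s' = R s - B t + F t

/-- `gcd_p`: the gcd of all (nonzero) input and output weights of a place. -/
def gcdPlace {Pl T : Type} [Fintype T] (N : PetriNet Pl T) (p : Pl) : ℕ :=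
  Finset.univ.gcd (fun t => Nat.gcd (N.pre p t) (N.post t p))

/-- Conservativeness of a net. -/
def conservative {Pl T : Type} [Fintype Pl] (N : PetriNet Pl T) : Prop :=
  ∃ X : Pl → ℕ, (∀ p, 1 ≤ X p) ∧
    ∀ t, ∑ p, (X p : ℤ) * ((N.post t p : ℤ) - (N.pre p t : ℤ)) = 0

/-- The P-subnet induced by a family of places. -/
def restrictNet {Pl T : Type} {k : ℕ} (N : PetriNet Pl T) (π : Fin k → Pl) :
    PetriNet (Fin k) T where
  pre := fun i t => N.pre (π i) t
  post := fun t i => N.post t (π i)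

section AuxProofs

open PetriNet

variable {L : Type} {k : ℕ}

private lemma fireSeq_append (N : PetriNet (Fin k) L) (M : Fin k → ℕ) (σ τ : List L) :
    N.fireSeq M (σ ++ τ) = N.fireSeq (N.fireSeq M σ) τ := by
  induction σ generalizing M with
  | nil => rfl
  | cons t σ ih => simp only [List.cons_append, PetriNet.fireSeq]; exact ih _

private lemma firable_append (N : PetriNet (Fin k) L) (M : Fin k → ℕ) (σ τ : List L) :
    N.firable M (σ ++ τ) ↔ N.firable M σ ∧ N.firable (N.fireSeq M σ) τ := by
  induction σ generalizing M with
  | nil => simp [PetriNet.firable, PetriNet.fireSeq]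
  | cons t σ ih =>
    simp only [List.cons_append, PetriNet.firable, PetriNet.fireSeq, List.append_eq, ih, and_assoc]

private lemma reach_to_list (N : PetriNet (Fin k) L) (M M' : Fin k → ℕ)
    (h : N.Reach M M') : ∃ σ, N.firable M σ ∧ N.fireSeq M σ = M' := by
  induction h with
  | refl => exact ⟨[], trivial, rfl⟩
  | tail h1 h2 ih =>
    obtain ⟨σ, hf, he⟩ := ih
    obtain ⟨t, hent, hft⟩ := h2
    refine ⟨σ ++ [t], ?_, ?_⟩
    · rw [firable_append]
      exact ⟨hf, by rw [he]; exact ⟨hent, trivial⟩⟩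
    · rw [fireSeq_append, he]
      exact hft.symm

private lemma seq_mark [DecidableEq L] (x y : L) (hxy : x ≠ y) (hall : ∀ t, t = x ∨ t = y)
    (N : PetriNet (Fin k) L) :
    ∀ (σ : List L) (M : Fin k → ℕ), N.firable M σ → ∀ p,
      (N.fireSeq M σ p : ℤ) = (M p : ℤ)
        + (σ.count x : ℤ) * ((N.post x p : ℤ) - (N.pre p x : ℤ))
        + (σ.count y : ℤ) * ((N.post y p : ℤ) - (N.pre p y : ℤ)) := by
  intro σ
  induction σ with
  | nil => intro M _ p; simp [PetriNet.fireSeq]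
  | cons t σ ih =>
    intro M hf p
    obtain ⟨hen, hf'⟩ := hf
    have hfire : (N.fire M t p : ℤ) = (M p : ℤ) - (N.pre p t : ℤ) + (N.post t p : ℤ) := by
      have := hen p; simp only [PetriNet.fire]; omega
    have hrec := ih (N.fire M t) hf' p
    rcases hall t with rfl | rfl
    · rw [show N.fireSeq M (t :: σ) = N.fireSeq (N.fire M t) σ from rfl] at *
      rw [hrec, hfire, List.count_cons_self, List.count_cons_of_ne hxy]
      push_cast
      ring
    · rw [show N.fireSeq M (t :: σ) = N.fireSeq (N.fire M t) σ from rfl] at *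
      rw [hrec, hfire, List.count_cons_self, List.count_cons_of_ne hxy.symm]
      push_cast
      ring

private lemma collapse (x y : L) (N : PetriNet (Fin k) L) (M0 : Fin k → ℕ)
    (hall : ∀ t, t = x ∨ t = y)
    (hEq : ∀ p, N.post x p = N.pre p x)
    (hback : ∀ M, N.Reach M0 M → N.Reach M M0) :
    ∀ M, N.Reach M0 M → M = M0 := by
  have hshift : ∀ M M', N.Reach M M' →
      ∃ n : ℕ, ∀ p, (M' p : ℤ) = (M p : ℤ) + (n : ℤ) * ((N.post y p : ℤ) - (N.pre p y : ℤ)) := by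
    intro M M' h
    induction h with
    | refl => exact ⟨0, by intro p; simp⟩
    | tail h1 h2 ih =>
      obtain ⟨n, hn⟩ := ih
      obtain ⟨t, hent, hft⟩ := h2
      rename_i Mb Mc
      rcases hall t with rfl | rfl
      · refine ⟨n, fun p => ?_⟩
        have h1' := hent p
        have h2' := hEq p
        rw [hft]
        have heq2 : N.fire Mb t p = Mb p := by
          simp only [PetriNet.fire]; omega
        rw [heq2]; exact hn p
      · refine ⟨n + 1, fun p => ?_⟩
        have h1' := hent p
        rw [hft]
        have hfp : (N.fire Mb t p : ℤ) = (Mb p : ℤ) + ((N.post t p : ℤ) - (N.pre p t : ℤ)) := by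
          simp only [PetriNet.fire]; omega
        rw [hfp, hn p]
        push_cast
        ring
  intro M hM
  obtain ⟨n, hn⟩ := hshift M0 M hM
  obtain ⟨n', hn'⟩ := hshift M M0 (hback M hM)
  by_cases hz : ∀ p, (N.post y p : ℤ) - (N.pre p y : ℤ) = 0
  · funext p
    have := hn p
    rw [hz p] at this
    omega
  · push_neg at hz
    obtain ⟨q, hq⟩ := hz
    have h1 := hn q
    have h2 := hn' q
    have hsum : ((n : ℤ) + (n' : ℤ)) * ((N.post y q : ℤ) - (N.pre q y : ℤ)) = 0 := by
      rw [add_mul]; linarith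
    rcases mul_eq_zero.mp hsum with h | h
    · have hn0 : n = 0 := by omega
      funext p
      have := hn p
      rw [hn0] at this
      omega
    · exact absurd h hq

private lemma bothPos [DecidableEq L] (x y : L) (hxy : x ≠ y) (hall : ∀ t, t = x ∨ t = y)
    (N : PetriNet (Fin k) L) (M0 : Fin k → ℕ)
    (hback : ∀ M, N.Reach M0 M → N.Reach M M0)
    (het : ∃ M₁ M₂, N.Reach M0 M₁ ∧ N.Reach M0 M₂ ∧ M₁ ≠ M₂)
    (M : Fin k → ℕ) (σ : List L) (hM : N.Reach M0 M) (hf : N.firable M σ)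
    (hc : N.fireSeq M σ = M) (hne : σ ≠ []) :
    0 < σ.count x := by
  by_contra h
  have hcx : σ.count x = 0 := by omega
  have hCy0 : ∀ p, N.post y p = N.pre p y := by
    intro p
    have hm := seq_mark x y hxy hall N σ M hf p
    rw [hc, hcx] at hm
    have hcy : 0 < σ.count y := by
      obtain ⟨t, ht⟩ := List.exists_mem_of_ne_nil σ hne
      rcases hall t with rfl | rfl
      · exact absurd (List.count_pos_iff.mpr ht) (by omega)
      · exact List.count_pos_iff.mpr ht
    have hprod : (σ.count y : ℤ) * ((N.post y p : ℤ) - (N.pre p y : ℤ)) = 0 := by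
      push_cast at hm ⊢
      linarith
    rcases mul_eq_zero.mp hprod with h' | h'
    · omega
    · omega
  obtain ⟨M₁, M₂, h1, h2, h12⟩ := het
  have hcol := collapse y x N M0 (fun t => (hall t).symm) hCy0 hback
  exact h12 ((hcol M₁ h1).trans (hcol M₂ h2).symm)

private lemma badStruct [DecidableEq L] (a b : L) (hab : a ≠ b) (hall : ∀ t, t = a ∨ t = b)
    (N : PetriNet (Fin k) L) (M0 : Fin k → ℕ) (hCF : N.choiceFree)
    (hback : ∀ M, N.Reach M0 M → N.Reach M M0)
    (het : ∃ M₁ M₂, N.Reach M0 M₁ ∧ N.Reach M0 M₂ ∧ M₁ ≠ M₂)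
    (p : Fin k) (hpa : 0 < N.post a p) (hpb : 0 < N.post b p) :
    (0 < N.pre p a ∧ N.pre p b = 0 ∧ N.post a p < N.pre p a) ∨
    (0 < N.pre p b ∧ N.pre p a = 0 ∧ N.post b p < N.pre p b) := by
  obtain ⟨M₁, M₂, h1, h2, h12⟩ := het
  have hM' : ∃ M', N.Reach M0 M' ∧ M' ≠ M0 := by
    by_cases h : M₁ = M0
    · exact ⟨M₂, h2, fun hh => h12 (by rw [h, hh])⟩
    · exact ⟨M₁, h1, h⟩
  obtain ⟨M', hM'r, hM'ne⟩ := hM'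
  obtain ⟨σ₁, hf₁, he₁⟩ := reach_to_list N M0 M' hM'r
  obtain ⟨σ₂, hf₂, he₂⟩ := reach_to_list N M' M0 (hback M' hM'r)
  have hfσ : N.firable M0 (σ₁ ++ σ₂) := by
    rw [firable_append]
    exact ⟨hf₁, by rw [he₁]; exact hf₂⟩
  have hcσ : N.fireSeq M0 (σ₁ ++ σ₂) = M0 := by rw [fireSeq_append, he₁, he₂]
  have hne : σ₁ ++ σ₂ ≠ [] := by
    intro h
    obtain ⟨h1', _⟩ := List.append_eq_nil_iff.mp h
    rw [h1'] at he₁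
    simp only [PetriNet.fireSeq] at he₁
    exact hM'ne he₁.symm
  have hca := bothPos a b hab hall N M0 hback ⟨M₁, M₂, h1, h2, h12⟩ M0 (σ₁ ++ σ₂)
    Relation.ReflTransGen.refl hfσ hcσ hne
  have hcb := bothPos b a hab.symm (fun t => (hall t).symm) N M0 hback ⟨M₁, M₂, h1, h2, h12⟩
    M0 (σ₁ ++ σ₂) Relation.ReflTransGen.refl hfσ hcσ hne
  have hzp : ((σ₁ ++ σ₂).count a : ℤ) * ((N.post a p : ℤ) - (N.pre p a : ℤ))
      + ((σ₁ ++ σ₂).count b : ℤ) * ((N.post b p : ℤ) - (N.pre p b : ℤ)) = 0 := by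
    have := seq_mark a b hab hall N (σ₁ ++ σ₂) M0 hfσ p
    rw [hcσ] at this
    linarith
  set ca := (σ₁ ++ σ₂).count a with hca_def
  set cb := (σ₁ ++ σ₂).count b with hcb_def
  have hca' : (0 : ℤ) < (ca : ℤ) := by exact_mod_cast hca
  have hcb' : (0 : ℤ) < (cb : ℤ) := by exact_mod_cast hcb
  by_cases hA : 0 < N.pre p a
  · left
    have hB : N.pre p b = 0 := by
      by_contra h
      exact hab (hCF p a b hA (Nat.pos_of_ne_zero h))
    refine ⟨hA, hB, ?_⟩
    rw [hB] at hzp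
    push_cast at hzp
    have h1' : (0 : ℤ) < (cb : ℤ) * ((N.post b p : ℤ) - 0) := by
      apply mul_pos hcb'
      have : (0 : ℤ) < (N.post b p : ℤ) := by exact_mod_cast hpb
      linarith
    by_contra hle
    push_neg at hle
    have hnn : (0 : ℤ) ≤ (ca : ℤ) * ((N.post a p : ℤ) - (N.pre p a : ℤ)) := by
      apply mul_nonneg (by positivity)
      have : (N.pre p a : ℤ) ≤ (N.post a p : ℤ) := by exact_mod_cast hle
      linarith
    linarith
  · have hA0 : N.pre p a = 0 := by omega
    by_cases hB : 0 < N.pre p b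
    · right
      refine ⟨hB, hA0, ?_⟩
      rw [hA0] at hzp
      push_cast at hzp
      have h1' : (0 : ℤ) < (ca : ℤ) * ((N.post a p : ℤ) - 0) := by
        apply mul_pos hca'
        have : (0 : ℤ) < (N.post a p : ℤ) := by exact_mod_cast hpa
        linarith
      by_contra hle
      push_neg at hle
      have hnn : (0 : ℤ) ≤ (cb : ℤ) * ((N.post b p : ℤ) - (N.pre p b : ℤ)) := by
        apply mul_nonneg (by positivity)
        have : (N.pre p b : ℤ) ≤ (N.post b p : ℤ) := by exact_mod_cast hle
        linarith
      linarith
    · exfalso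
      have hB0 : N.pre p b = 0 := by omega
      rw [hA0, hB0] at hzp
      push_cast at hzp
      have h1' : (0 : ℤ) < (ca : ℤ) * ((N.post a p : ℤ) - 0) := by
        apply mul_pos hca'
        have : (0 : ℤ) < (N.post a p : ℤ) := by exact_mod_cast hpa
        linarith
      have h2' : (0 : ℤ) < (cb : ℤ) * ((N.post b p : ℤ) - 0) := by
        apply mul_pos hcb'
        have : (0 : ℤ) < (N.post b p : ℤ) := by exact_mod_cast hpb
        linarith
      linarith

private lemma lemZ [DecidableEq L] (x y : L) (hxy : x ≠ y) (hall : ∀ t, t = x ∨ t = y)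
    (N : PetriNet (Fin k) L) (M0 : Fin k → ℕ)
    (hback : ∀ M, N.Reach M0 M → N.Reach M M0)
    (het : ∃ M₁ M₂, N.Reach M0 M₁ ∧ N.Reach M0 M₂ ∧ M₁ ≠ M₂)
    (p : Fin k) (hpy : N.pre p y = 0) :
    ∀ M, N.Reach M0 M → N.post x p ≤ M p := by
  have claimC : ∀ (σ : List L) (M : Fin k → ℕ),
      (0 < σ.count x ∨ N.post x p ≤ M p) → N.post x p ≤ N.fireSeq M σ p := by
    intro σ
    induction σ with
    | nil =>
      intro M h
      rcases h with h | h
      · simp at h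
      · exact h
    | cons t σ ih =>
      intro M h
      rcases hall t with rfl | rfl
      · refine ih _ (Or.inr ?_)
        simp only [PetriNet.fire]
        omega
      · refine ih _ ?_
        rcases h with h | h
        · left
          rwa [List.count_cons_of_ne hxy.symm] at h
        · right
          simp only [PetriNet.fire, hpy]
          omega
  intro M hM
  obtain ⟨M₁, M₂, h1, h2, h12⟩ := het
  have hMne : ∃ M'', N.Reach M0 M'' ∧ M'' ≠ M := by
    by_cases h : M₁ = M
    · exact ⟨M₂, h2, fun hh => h12 (by rw [h, hh])⟩
    · exact ⟨M₁, h1, h⟩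
  obtain ⟨M'', hr'', hne''⟩ := hMne
  obtain ⟨σ₁, hf₁, he₁⟩ := reach_to_list N M M0 (hback M hM)
  obtain ⟨σ₂, hf₂, he₂⟩ := reach_to_list N M0 M'' hr''
  obtain ⟨σ₃, hf₃, he₃⟩ := reach_to_list N M'' M0 (hback M'' hr'')
  obtain ⟨σ₄, hf₄, he₄⟩ := reach_to_list N M0 M hM
  set σ := σ₁ ++ (σ₂ ++ (σ₃ ++ σ₄)) with hσdef
  have hfσ : N.firable M σ := by
    rw [hσdef, firable_append, he₁, firable_append, he₂, firable_append, he₃]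
    exact ⟨hf₁, hf₂, hf₃, hf₄⟩
  have hcσ : N.fireSeq M σ = M := by
    rw [hσdef, fireSeq_append, he₁, fireSeq_append, he₂, fireSeq_append, he₃, he₄]
  have hne : σ ≠ [] := by
    intro h
    rw [hσdef] at h
    obtain ⟨ha1, h'⟩ := List.append_eq_nil_iff.mp h
    obtain ⟨ha2, _⟩ := List.append_eq_nil_iff.mp h'
    rw [ha1] at he₁
    rw [ha2] at he₂
    simp only [PetriNet.fireSeq] at he₁ he₂
    exact hne'' (he₂.symm.trans he₁.symm)
  have hcount := bothPos x y hxy hall N M0 hback ⟨M₁, M₂, h1, h2, h12⟩ M σ hM hfσ hcσ hne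
  have := claimC σ M (Or.inl hcount)
  rwa [hcσ] at this

end AuxProofs
section Constructions

open PetriNet

variable {L : Type} {k : ℕ}

private lemma het_case [DecidableEq L] (a b : L) (hab : a ≠ b) (hall : ∀ t, t = a ∨ t = b)
    (N : PetriNet (Fin k) L) (M0 : Fin k → ℕ) (hCF : N.choiceFree)
    (hback : ∀ M, N.Reach M0 M → N.Reach M M0)
    (het : ∃ M₁ M₂, N.Reach M0 M₁ ∧ N.Reach M0 M₂ ∧ M₁ ≠ M₂) :
    ∃ (k' : ℕ) (N' : PetriNet (Fin k') L) (M0' : Fin k' → ℕ), N'.wmg ∧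
      ∃ e : {M // N.Reach M0 M} ≃ {M // N'.Reach M0' M},
        e ((N.RG M0).init) = ((N'.RG M0').init) ∧
        ∀ X t X', (N.RG M0).tr X t X' ↔ (N'.RG M0').tr (e X) t (e X') := by
  classical
  set s : Fin k → ℕ := fun p =>
    if 0 < N.post a p ∧ 0 < N.post b p then
      (if 0 < N.pre p a then N.post a p else N.post b p) else 0 with hs_def
  set N' : PetriNet (Fin k) L :=
    { pre := fun p t => if 0 < N.post a p ∧ 0 < N.post b p then N.pre p t - N.post t p else N.pre p t,
      post := fun t p => if (0 < N.post a p ∧ 0 < N.post b p) ∧ 0 < N.pre p t then 0 else N.post t p }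
    with hN'_def
  set M0' : Fin k → ℕ := fun p => M0 p - s p with hM0'_def
  -- trichotomy on places
  have trich : ∀ p,
      (¬(0 < N.post a p ∧ 0 < N.post b p) ∧ s p = 0 ∧
        (∀ t, N'.pre p t = N.pre p t) ∧ (∀ t, N'.post t p = N.post t p)) ∨
      (0 < N.post a p ∧ 0 < N.post b p ∧ 0 < N.pre p a ∧ N.pre p b = 0 ∧
        N.post a p < N.pre p a ∧ s p = N.post a p ∧
        N'.pre p a = N.pre p a - N.post a p ∧ N'.pre p b = 0 ∧
        N'.post a p = 0 ∧ N'.post b p = N.post b p ∧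
        (∀ M, N.Reach M0 M → N.post a p ≤ M p)) ∨
      (0 < N.post a p ∧ 0 < N.post b p ∧ 0 < N.pre p b ∧ N.pre p a = 0 ∧
        N.post b p < N.pre p b ∧ s p = N.post b p ∧
        N'.pre p b = N.pre p b - N.post b p ∧ N'.pre p a = 0 ∧
        N'.post b p = 0 ∧ N'.post a p = N.post a p ∧
        (∀ M, N.Reach M0 M → N.post b p ≤ M p)) := by
    intro p
    by_cases hbad : 0 < N.post a p ∧ 0 < N.post b p
    · rcases badStruct a b hab hall N M0 hCF hback het p hbad.1 hbad.2 with
        ⟨hpa, hpb0, hum⟩ | ⟨hpb, hpa0, hum⟩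
      · right; left
        refine ⟨hbad.1, hbad.2, hpa, hpb0, hum, ?_, ?_, ?_, ?_, ?_, ?_⟩
        · simp only [hs_def, if_pos hbad, if_pos hpa]
        · simp only [hN'_def, if_pos hbad]
        · simp only [hN'_def, if_pos hbad, hpb0]
          omega
        · simp only [hN'_def, if_pos (And.intro hbad hpa)]
        · have : ¬((0 < N.post a p ∧ 0 < N.post b p) ∧ 0 < N.pre p b) := by
            intro h; omega
          simp only [hN'_def, if_neg this]
        · exact lemZ a b hab hall N M0 hback het p hpb0
      · right; right
        have hpa' : ¬ 0 < N.pre p a := by omega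
        refine ⟨hbad.1, hbad.2, hpb, hpa0, hum, ?_, ?_, ?_, ?_, ?_, ?_⟩
        · simp only [hs_def, if_pos hbad, if_neg hpa']
        · simp only [hN'_def, if_pos hbad]
        · simp only [hN'_def, if_pos hbad, hpa0]
          omega
        · simp only [hN'_def, if_pos (And.intro hbad hpb)]
        · have : ¬((0 < N.post a p ∧ 0 < N.post b p) ∧ 0 < N.pre p a) := by
            intro h; omega
          simp only [hN'_def, if_neg this]
        · exact lemZ b a hab.symm (fun t => (hall t).symm) N M0 hback het p hpa0
    · left
      refine ⟨hbad, ?_, ?_, ?_⟩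
      · simp only [hs_def, if_neg hbad]
      · intro t; simp only [hN'_def, if_neg hbad]
      · intro t
        have : ¬((0 < N.post a p ∧ 0 < N.post b p) ∧ 0 < N.pre p t) := by
          intro h; exact hbad h.1
        simp only [hN'_def, if_neg this]
  have slee : ∀ M, N.Reach M0 M → ∀ p, s p ≤ M p := by
    intro M hM p
    rcases trich p with ⟨_, h0, _, _⟩ | ⟨_, _, _, _, _, hs, _, _, _, _, hbd⟩ |
      ⟨_, _, _, _, _, hs, _, _, _, _, hbd⟩
    · omega
    · rw [hs]; exact hbd M hM
    · rw [hs]; exact hbd M hM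
  -- enabledness correspondence
  have hpoint : ∀ (M : Fin k → ℕ) p, s p ≤ M p → ∀ t,
      (N.pre p t ≤ M p ↔ N'.pre p t ≤ M p - s p) := by
    intro M p h2 t
    rcases trich p with ⟨_, h0, hpre, _⟩ |
      ⟨_, _, hpa, hpb0, hum, hs, hea, heb, _, _, _⟩ |
      ⟨_, _, hpb, hpa0, hum, hs, heb, hea, _, _, _⟩
    · rw [hpre t, h0]
      omega
    · rcases hall t with rfl | rfl
      · rw [hea, hs]; rw [hs] at h2; omega
      · rw [heb, hs, hpb0]; rw [hs] at h2; omega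
    · rcases hall t with rfl | rfl
      · rw [hea, hs, hpa0]; rw [hs] at h2; omega
      · rw [heb, hs]; rw [hs] at h2; omega
  have hen : ∀ M, (∀ p, s p ≤ M p) → ∀ t,
      (N.enabled M t ↔ N'.enabled (fun p => M p - s p) t) := by
    intro M hsle t
    constructor
    · intro h p
      exact (hpoint M p (hsle p) t).1 (h p)
    · intro h p
      exact (hpoint M p (hsle p) t).2 (h p)
  -- firing correspondence
  have hfi : ∀ M, (∀ p, s p ≤ M p) → ∀ t,
      (fun p => N.fire M t p - s p) = N'.fire (fun p => M p - s p) t := by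
    intro M hsle t
    funext p
    have h2 := hsle p
    show N.fire M t p - s p = (M p - s p) - N'.pre p t + N'.post t p
    rw [show N.fire M t p = M p - N.pre p t + N.post t p from rfl]
    rcases trich p with ⟨_, h0, hpre, hpost⟩ |
      ⟨_, _, hpa, hpb0, hum, hs, hea, heb, hoa, hob, _⟩ |
      ⟨_, _, hpb, hpa0, hum, hs, heb, hea, hob, hoa, _⟩
    · rw [hpre t, hpost t, h0]
      omega
    · rw [hs] at h2 ⊢
      rcases hall t with rfl | rfl
      · rw [hea, hoa]; omega
      · rw [heb, hob, hpb0]; omega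
    · rw [hs] at h2 ⊢
      rcases hall t with rfl | rfl
      · rw [hea, hoa, hpa0]; omega
      · rw [heb, hob]; omega
  have fwd : ∀ M, N.Reach M0 M → N'.Reach M0' (fun p => M p - s p) := by
    intro M h
    induction h with
    | refl => exact Relation.ReflTransGen.refl
    | tail h1 h2 ih =>
      rename_i Mb Mc
      obtain ⟨t, hent, hft⟩ := h2
      refine ih.tail ⟨t, (hen Mb (slee Mb h1) t).1 hent, ?_⟩
      rw [hft]
      exact (hfi Mb (slee Mb h1) t).symm ▸ rfl
  have bwd : ∀ X, N'.Reach M0' X → ∃ M, N.Reach M0 M ∧ X = (fun p => M p - s p) := by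
    intro X h
    induction h with
    | refl => exact ⟨M0, Relation.ReflTransGen.refl, rfl⟩
    | tail h1 h2 ih =>
      obtain ⟨M1, hM1, rfl⟩ := ih
      obtain ⟨t, hen', hf'⟩ := h2
      have he : N.enabled M1 t := (hen M1 (slee M1 hM1) t).2 hen'
      refine ⟨N.fire M1 t, hM1.tail ⟨t, he, rfl⟩, ?_⟩
      rw [hf']
      exact (hfi M1 (slee M1 hM1) t).symm
  have hinj : ∀ M M', N.Reach M0 M → N.Reach M0 M' →
      (fun p => M p - s p) = (fun p => M' p - s p) → M = M' := by
    intro M M' h h' heq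
    funext p
    have e1 := congrFun heq p
    have e2 := slee M h p
    have e3 := slee M' h' p
    omega
  have hstep : ∀ (M M' : Fin k → ℕ), N.Reach M0 M → N.Reach M0 M' → ∀ t,
      (N.step M t M' ↔ N'.step (fun p => M p - s p) t (fun p => M' p - s p)) := by
    intro M M' hM hM' t
    constructor
    · rintro ⟨he, hEq⟩
      refine ⟨(hen M (slee M hM) t).1 he, ?_⟩
      rw [hEq]
      exact hfi M (slee M hM) t
    · rintro ⟨he', hEq⟩
      have he := (hen M (slee M hM) t).2 he'
      refine ⟨he, ?_⟩
      refine hinj M' (N.fire M t) hM' (hM.tail ⟨t, he, rfl⟩) ?_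
      rw [hEq]
      exact (hfi M (slee M hM) t).symm
  -- the net is a WMG
  have hwmg : N'.wmg := by
    constructor
    · intro p t t' h h'
      have hle : ∀ u, N'.pre p u ≤ N.pre p u := by
        intro u
        simp only [hN'_def]
        split <;> omega
      exact hCF p t t' (lt_of_lt_of_le h (hle t)) (lt_of_lt_of_le h' (hle t'))
    · intro p t t' h h'
      have key : 0 < N'.post a p → 0 < N'.post b p → False := by
        intro ha' hb'
        rcases trich p with ⟨hnb, _, _, hpost⟩ |
          ⟨_, _, _, _, _, _, _, _, hoa, hob, _⟩ | ⟨_, _, _, _, _, _, _, _, hob, hoa, _⟩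
        · rw [hpost a] at ha'; rw [hpost b] at hb'; exact hnb ⟨ha', hb'⟩
        · rw [hoa] at ha'; omega
        · rw [hob] at hb'; omega
      rcases hall t with ht | ht <;> rcases hall t' with ht' | ht' <;> rw [ht, ht'] <;>
        rw [ht] at h <;> rw [ht'] at h'
      · exact (key h h').elim
      · exact (key h' h).elim
  -- build the equivalence
  have hM0' : M0' = fun p => M0 p - s p := rfl
  refine ⟨k, N', M0', hwmg, ?_⟩
  have hFbij : Function.Bijective
      (fun X : {M // N.Reach M0 M} =>
        (⟨fun p => X.1 p - s p, fwd X.1 X.2⟩ : {M // N'.Reach M0' M})) := by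
    constructor
    · intro X Y hXY
      exact Subtype.ext (hinj X.1 Y.1 X.2 Y.2 (congrArg Subtype.val hXY))
    · intro X
      obtain ⟨M, hM, hEq⟩ := bwd X.1 X.2
      exact ⟨⟨M, hM⟩, Subtype.ext hEq.symm⟩
  refine ⟨Equiv.ofBijective _ hFbij, ?_, ?_⟩
  · apply Subtype.ext
    rfl
  · intro X t X'
    exact hstep X.1 X'.1 X.2 X'.2 t

private lemma single_case [DecidableEq L] (a b : L) (hab : a ≠ b) (hall : ∀ t, t = a ∨ t = b)
    (N : PetriNet (Fin k) L) (M0 : Fin k → ℕ)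
    (hsing : ∀ M, N.Reach M0 M → M = M0) :
    ∃ (k' : ℕ) (N' : PetriNet (Fin k') L) (M0' : Fin k' → ℕ), N'.wmg ∧
      ∃ e : {M // N.Reach M0 M} ≃ {M // N'.Reach M0' M},
        e ((N.RG M0).init) = ((N'.RG M0').init) ∧
        ∀ X t X', (N.RG M0).tr X t X' ↔ (N'.RG M0').tr (e X) t (e X') := by
  classical
  set N' : PetriNet (Fin 2) L :=
    { pre := fun i t => if (i = 0 ∧ t = a ∧ ¬N.enabled M0 a) ∨ (i = 1 ∧ t = b ∧ ¬N.enabled M0 b)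
        then 1 else 0,
      post := fun _ _ => 0 } with hN'_def
  have hfire0 : ∀ t, N'.fire (fun _ => 0) t = fun _ => 0 := by
    intro t
    funext i
    show 0 - N'.pre i t + N'.post t i = 0
    have h0 : N'.post t i = 0 := rfl
    rw [h0]
    omega
  have henb : ∀ t, (N'.enabled (fun _ => 0) t ↔ N.enabled M0 t) := by
    intro t
    constructor
    · intro h
      rcases hall t with ht | ht
      · by_contra hna
        rw [ht] at hna
        have h0 := h 0
        have hc : N'.pre 0 t = 1 := if_pos (Or.inl ⟨rfl, ht, hna⟩)
        rw [hc] at h0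
        simp at h0
      · by_contra hnb
        rw [ht] at hnb
        have h1 := h 1
        have hc : N'.pre 1 t = 1 := if_pos (Or.inr ⟨rfl, ht, hnb⟩)
        rw [hc] at h1
        simp at h1
    · intro h i
      have hc : N'.pre i t = 0 := by
        refine if_neg ?_
        rintro (⟨-, hta, hna⟩ | ⟨-, htb, hnb⟩)
        · exact hna (hta ▸ h)
        · exact hnb (htb ▸ h)
      rw [hc]
  have hsing' : ∀ X, N'.Reach (fun _ => 0) X → X = fun _ => 0 := by
    intro X h
    induction h with
    | refl => rfl
    | tail h1 h2 ih =>
      obtain ⟨t, _, hft⟩ := h2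
      rw [hft, ih, hfire0 t]
  have hchar : ∀ (i : Fin 2) t, 0 < N'.pre i t → (i = 0 ∧ t = a) ∨ (i = 1 ∧ t = b) := by
    intro i t h
    by_cases hc : (i = 0 ∧ t = a ∧ ¬N.enabled M0 a) ∨ (i = 1 ∧ t = b ∧ ¬N.enabled M0 b)
    · rcases hc with ⟨h1, h2, -⟩ | ⟨h1, h2, -⟩
      · exact Or.inl ⟨h1, h2⟩
      · exact Or.inr ⟨h1, h2⟩
    · have h0 : N'.pre i t = 0 := if_neg hc
      omega
  have hwmg : N'.wmg := by
    constructor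
    · intro p t t' h h'
      rcases hchar p t h with ⟨hp, ht⟩ | ⟨hp, ht⟩ <;>
        rcases hchar p t' h' with ⟨hp', ht'⟩ | ⟨hp', ht'⟩ <;> rw [ht, ht']
      · rw [hp] at hp'; exact absurd hp' (by decide)
      · rw [hp] at hp'; exact absurd hp' (by decide)
    · intro p t t' h h'
      have h0 : N'.post t p = 0 := rfl
      rw [h0] at h
      omega
  refine ⟨2, N', fun _ => 0, hwmg, ?_⟩
  have hstep0 : ∀ t, (N.step M0 t M0 ↔ N'.step (fun _ => 0) t (fun _ => 0)) := by
    intro t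
    constructor
    · rintro ⟨he, _⟩
      exact ⟨(henb t).2 he, (hfire0 t).symm⟩
    · rintro ⟨he, _⟩
      have hen := (henb t).1 he
      refine ⟨hen, ?_⟩
      exact (hsing (N.fire M0 t) (Relation.ReflTransGen.refl.tail ⟨t, hen, rfl⟩)).symm
  refine ⟨⟨fun _ => ⟨fun _ => 0, Relation.ReflTransGen.refl⟩,
           fun _ => ⟨M0, Relation.ReflTransGen.refl⟩, ?_, ?_⟩, ?_, ?_⟩
  · intro X
    exact Subtype.ext (hsing X.1 X.2).symm
  · intro X
    exact Subtype.ext (hsing' X.1 X.2).symm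
  · rfl
  · intro X t X'
    have hX : X.1 = M0 := hsing X.1 X.2
    have hX' : X'.1 = M0 := hsing X'.1 X'.2
    show N.step X.1 t X'.1 ↔ N'.step (fun _ => 0) t (fun _ => 0)
    rw [hX, hX']
    exact hstep0 t

end Constructions
/-- a reversible LTS over two labels is CF-solvable iff it is WMG-solvable. -/
theorem stmt1 {S L : Type} [Fintype L] (hcard : Fintype.card L = 2)
    (A : LTS S L) (hrev : A.reversible) : CFSolvable A ↔ WMGSolvable A := by
  classical
  constructor
  · rintro ⟨k, N, M0, hCF, hsol⟩
    obtain ⟨ζ, hζ0, hζtr⟩ := hsol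
    -- two labels
    obtain ⟨a, b, hab, hall⟩ : ∃ a b : L, a ≠ b ∧ ∀ t, t = a ∨ t = b := by
      have h2 : Nat.card L = 2 := by simp [Nat.card_eq_fintype_card, hcard]
      obtain ⟨a, b, hab, hU⟩ := Nat.card_eq_two_iff.mp h2
      refine ⟨a, b, hab, fun t => ?_⟩
      have : t ∈ ({a, b} : Set L) := hU ▸ Set.mem_univ t
      simpa using this
    -- transfer reachability back along the isomorphism
    have htrans : ∀ s s', A.reach s s' → ∀ (X X' : {M // N.Reach M0 M}),
        ζ X = s → ζ X' = s' → N.Reach X.1 X'.1 := by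
      intro s s' h
      induction h with
      | refl =>
        intro X X' hX hX'
        have : X = X' := ζ.injective (hX.trans hX'.symm)
        rw [this]
        exact Relation.ReflTransGen.refl
      | tail h1 h2 ih =>
        rename_i sb sc
        intro X X' hX hX'
        obtain ⟨t, htr⟩ := h2
        have hmid : N.Reach X.1 (ζ.symm sb).1 :=
          ih X (ζ.symm sb) hX (ζ.apply_symm_apply sb)
        have htr' : A.tr (ζ (ζ.symm sb)) t (ζ X') := by
          rw [ζ.apply_symm_apply, hX']
          exact htr
        have hstep : (N.RG M0).tr (ζ.symm sb) t X' := (hζtr _ t _).mpr htr'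
        exact hmid.tail ⟨t, hstep⟩
    have hback : ∀ M, N.Reach M0 M → N.Reach M M0 := by
      intro M hM
      have := htrans (ζ ⟨M, hM⟩) A.init (hrev (ζ ⟨M, hM⟩)).2 ⟨M, hM⟩
        ⟨M0, Relation.ReflTransGen.refl⟩ rfl hζ0
      exact this
    -- dichotomy
    have hout : ∃ (k' : ℕ) (N' : PetriNet (Fin k') L) (M0' : Fin k' → ℕ), N'.wmg ∧
        ∃ e : {M // N.Reach M0 M} ≃ {M // N'.Reach M0' M},
          e ((N.RG M0).init) = ((N'.RG M0').init) ∧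
          ∀ X t X', (N.RG M0).tr X t X' ↔ (N'.RG M0').tr (e X) t (e X') := by
      by_cases hsing : ∀ M M', N.Reach M0 M → N.Reach M0 M' → M = M'
      · exact single_case a b hab hall N M0
          (fun M hM => hsing M M0 hM Relation.ReflTransGen.refl)
      · push_neg at hsing
        obtain ⟨M₁, M₂, h1, h2, h12⟩ := hsing
        exact het_case a b hab hall N M0 hCF hback ⟨M₁, M₂, h1, h2, h12⟩
    obtain ⟨k', N', M0', hwmg, e, he0, hetr⟩ := hout
    refine ⟨k', N', M0', hwmg, e.symm.trans ζ, ?_, ?_⟩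
    · show ζ (e.symm ((N'.RG M0').init)) = A.init
      rw [← he0, Equiv.symm_apply_apply]
      exact hζ0
    · intro X t X'
      obtain ⟨Y, rfl⟩ := e.surjective X
      obtain ⟨Y', rfl⟩ := e.surjective X'
      rw [← hetr Y t Y']
      simp only [Equiv.trans_apply, Equiv.symm_apply_apply]
      exact hζtr Y t Y'
  · rintro ⟨k, N, M0, hwmg, hsol⟩
    exact ⟨k, N, M0, hwmg.1, hsol⟩
end

section
/- Let w be a word over a finite alphabet T whose Parikh vector P(w) is prime. Suppose that for every pair of circularly adjacent labels t1,t2 of w, the projection u of w on {t1,t2} can be written u=v^ℓ for some positive integer ℓ, where the Parikh vector P(v) is prime and v is cyclically solvable by a circuit system. Then w is cyclically solvable by a weighted marked graph. -/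
section Mu
variable {T' : Type} {k : ℕ}

/-- The marking sequence of a system along the cyclic word `v`. -/
def muSeq (N : PetriNet (Fin k) T') (M0 : Fin k → ℕ) (v : List T') (hv : 0 < v.length) :
    ℕ → (Fin k → ℕ)
  | 0 => M0
  | c+1 => N.fire (muSeq N M0 v hv c) (v.get ⟨c % v.length, Nat.mod_lt _ hv⟩)

theorem muSeq_spec (N : PetriNet (Fin k) T') (M0 : Fin k → ℕ) (v : List T') (hv : 0 < v.length)
    (hs : Solves N M0 (circLTS v hv)) :
    (∀ c t M', N.step (muSeq N M0 v hv c) t M' ↔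
      (t = v.get ⟨c % v.length, Nat.mod_lt _ hv⟩ ∧ M' = muSeq N M0 v hv (c+1)))
    ∧ ∀ c, muSeq N M0 v hv c = muSeq N M0 v hv (c % v.length) := by
  obtain ⟨ζ, hinit, htr⟩ := hs
  have aux : ∀ c, ∃ h : N.Reach M0 (muSeq N M0 v hv c),
      ζ ⟨muSeq N M0 v hv c, h⟩ = ⟨c % v.length, Nat.mod_lt _ hv⟩ := by
    intro c
    induction c with
    | zero =>
      refine ⟨Relation.ReflTransGen.refl, ?_⟩
      have : ((circLTS v hv).init : Fin v.length) = ⟨0 % v.length, Nat.mod_lt _ hv⟩ :=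
        Fin.ext (by simp [circLTS])
      rw [← this]
      exact hinit
    | succ c ih =>
      obtain ⟨hr, hζ⟩ := ih
      have htr' : (circLTS v hv).tr (ζ ⟨muSeq N M0 v hv c, hr⟩)
          (v.get ⟨c % v.length, Nat.mod_lt _ hv⟩)
          (ζ (ζ.symm ⟨(c+1) % v.length, Nat.mod_lt _ hv⟩)) := by
        rw [hζ, Equiv.apply_symm_apply]
        exact ⟨rfl, (Nat.mod_add_mod c v.length 1).symm⟩
      have hstep : N.step (muSeq N M0 v hv c) (v.get ⟨c % v.length, Nat.mod_lt _ hv⟩)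
          (ζ.symm ⟨(c+1) % v.length, Nat.mod_lt _ hv⟩).1 :=
        (htr _ _ _).mpr htr'
      have hfire : (ζ.symm ⟨(c+1) % v.length, Nat.mod_lt _ hv⟩).1 = muSeq N M0 v hv (c+1) :=
        hstep.2
      have hr' : N.Reach M0 (muSeq N M0 v hv (c+1)) := hfire ▸ hr.tail ⟨_, hstep⟩
      refine ⟨hr', ?_⟩
      have h6 : (ζ.symm ⟨(c+1) % v.length, Nat.mod_lt _ hv⟩)
          = ⟨muSeq N M0 v hv (c+1), hr'⟩ := Subtype.ext hfire
      rw [← h6, Equiv.apply_symm_apply]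
  constructor
  · intro c t M'
    obtain ⟨hr, hζ⟩ := aux c
    obtain ⟨hr', hζ'⟩ := aux (c+1)
    constructor
    · intro hstep
      have hrM' : N.Reach M0 M' := hr.tail ⟨t, hstep⟩
      have h2 : (circLTS v hv).tr (ζ ⟨muSeq N M0 v hv c, hr⟩) t (ζ ⟨M', hrM'⟩) :=
        (htr ⟨_, hr⟩ t ⟨M', hrM'⟩).mp hstep
      rw [hζ] at h2
      obtain ⟨h3, h4⟩ := h2
      refine ⟨h3, ?_⟩
      have h5 : ζ ⟨M', hrM'⟩ = ⟨(c+1) % v.length, Nat.mod_lt _ hv⟩ :=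
        Fin.ext (by rw [h4]; exact Nat.mod_add_mod c v.length 1)
      exact Subtype.ext_iff.mp (ζ.injective (h5.trans hζ'.symm))
    · rintro ⟨rfl, rfl⟩
      have htr' : (circLTS v hv).tr (ζ ⟨muSeq N M0 v hv c, hr⟩)
          (v.get ⟨c % v.length, Nat.mod_lt _ hv⟩) (ζ ⟨muSeq N M0 v hv (c+1), hr'⟩) := by
        rw [hζ, hζ']
        exact ⟨rfl, (Nat.mod_add_mod c v.length 1).symm⟩
      exact (htr _ _ _).mpr htr'
  · intro c
    obtain ⟨hr, hζ⟩ := aux c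
    obtain ⟨hr', hζ'⟩ := aux (c % v.length)
    have h7 : ζ ⟨muSeq N M0 v hv c, hr⟩ = ζ ⟨muSeq N M0 v hv (c % v.length), hr'⟩ := by
      rw [hζ, hζ']
      exact Fin.ext (Nat.mod_mod_of_dvd c dvd_rfl).symm
    exact Subtype.ext_iff.mp (ζ.injective h7)

end Mu
section Lists
variable {T' : Type}

theorem getElem_idx_congr (l : List T') {i j : ℕ} (h : i = j) (hi : i < l.length) :
    l[i] = l[j]'(h ▸ hi) := by subst h; rfl

theorem len_flatrep (ℓ : ℕ) (v : List T') :
    ((List.replicate ℓ v).flatten).length = ℓ * v.length := by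
  induction ℓ with
  | zero => simp
  | succ ℓ ih => simp [List.replicate_succ, ih]; ring

theorem get_flatrep (ℓ : ℕ) (v : List T') (c : ℕ) (h : c < ℓ * v.length)
    (hv : 0 < v.length) :
    ((List.replicate ℓ v).flatten)[c]'(by rw [len_flatrep]; exact h)
      = v[c % v.length]'(Nat.mod_lt _ hv) := by
  induction ℓ generalizing c with
  | zero => omega
  | succ ℓ ih =>
    have e1 : (List.replicate (ℓ+1) v).flatten = v ++ (List.replicate ℓ v).flatten := by
      rw [List.replicate_succ, List.flatten_cons]
    rw [List.getElem_of_eq e1]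
    by_cases hc : c < v.length
    · rw [List.getElem_append_left hc]
      congr 1
      exact (Nat.mod_eq_of_lt hc).symm
    · push_neg at hc
      have h2 : c - v.length < ℓ * v.length := by
        have hx : (ℓ+1) * v.length = ℓ * v.length + v.length := by ring
        omega
      rw [List.getElem_append_right hc]
      have hidx : (c - v.length) % v.length = c % v.length := by
        conv_rhs => rw [show c = (c - v.length) + v.length by omega]
        exact (Nat.add_mod_right _ _).symm
      have := (ih (c - v.length) h2).trans (getElem_idx_congr v hidx _)
      exact this

end Lists

section Proj
variable {L : Type} [DecidableEq L] {a b : L}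

theorem projPair_append (l l' : List L) :
    projPair (l ++ l') a b = projPair l a b ++ projPair l' a b :=
  List.filterMap_append ..

theorem projPair_cons_mem (x : L) (h : x = a ∨ x = b) (l : List L) :
    projPair (x :: l) a b = ⟨x, h⟩ :: projPair l a b := by
  simp [projPair, h]

theorem projPair_cons_not_mem (x : L) (h : ¬(x = a ∨ x = b)) (l : List L) :
    projPair (x :: l) a b = projPair l a b := by
  simp [projPair, h]

theorem projPair_ne_nil (l : List L) (x : L) (hx : x ∈ l) (h : x = a ∨ x = b) :
    0 < (projPair l a b).length := by
  have : (⟨x, h⟩ : {y : L // y = a ∨ y = b}) ∈ projPair l a b := by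
    rw [projPair, List.mem_filterMap]
    exact ⟨x, hx, by simp [h]⟩
  exact List.length_pos_iff.mpr (List.ne_nil_of_mem this)

/-- If position `d` of `l` holds `a` and no position `≤ d` holds `b`,
then the first projected letter of `l` is `a`. -/
theorem projPair_head (hab : a ≠ b) :
    ∀ (l : List L) (d : ℕ) (hd : d < l.length), l[d] = a →
    (∀ i (hi : i ≤ d), l[i]'(by omega) ≠ b) →
    ∃ h : 0 < (projPair l a b).length, ((projPair l a b)[0]'h).val = a := by
  intro l
  induction l with
  | nil => intro d hd; simp at hd
  | cons x l ih =>
    intro d hd hda hnb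
    by_cases hxa : x = a
    · subst hxa
      rw [projPair_cons_mem x (Or.inl rfl)]
      exact ⟨by simp, rfl⟩
    · have hxb : x ≠ b := by
        have := hnb 0 (Nat.zero_le d)
        simpa using this
      cases d with
      | zero => simp at hda; exact absurd hda hxa
      | succ d =>
        rw [projPair_cons_not_mem x (by tauto)]
        refine ih d (by simpa using Nat.lt_of_succ_lt_succ hd) (by simpa using hda) ?_
        intro i hi
        have := hnb (i+1) (by omega)
        simpa using this

end Proj
section ModAux

theorem mod_succ_eq (i n : ℕ) : (i + 1) % n = (i % n + 1) % n :=
  (Nat.mod_add_mod i n 1).symm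

theorem mod_add_cancel (i g : ℕ) : (g + i) % g = i % g := by
  rw [Nat.add_comm g i]; exact Nat.add_mod_right i g

theorem mod_mod_self' (i g : ℕ) : i % g % g = i % g :=
  Nat.mod_mod_of_dvd i dvd_rfl

theorem mod_sub_cancel (i g : ℕ) (h : g ≤ i) : (i - g) % g = i % g := by
  conv_rhs => rw [show i = (i - g) + g by omega]
  exact (Nat.add_mod_right _ _).symm

end ModAux

section Count

/-- Counting in a `g`-periodic list. -/
theorem count_periodic_aux {L : Type} [DecidableEq L] (g : ℕ) (hg : 0 < g) (t : L) :
    ∀ (q : ℕ) (l : List L), l.length = q * g →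
    (∀ i (h : i < l.length) (h' : i % g < l.length), l[i] = l[i % g]) →
    l.count t = q * (l.take g).count t := by
  intro q
  induction q with
  | zero =>
    intro l hl _
    have : l = [] := List.length_eq_zero_iff.mp (by simpa using hl)
    subst this; simp
  | succ q ih =>
    intro l hl hper
    have hql : (q + 1) * g = q * g + g := by ring
    have hgl : g ≤ l.length := by omega
    have hlen : (l.drop g).length = q * g := by rw [List.length_drop]; omega
    have hcnt : l.count t = (l.take g).count t + (l.drop g).count t := by
      conv_lhs => rw [← List.take_append_drop g l]
      rw [List.count_append]
    have hper' : ∀ i (h : i < (l.drop g).length) (h' : i % g < (l.drop g).length),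
        (l.drop g)[i] = (l.drop g)[i % g] := by
      intro i h h'
      rw [hlen] at h h'
      have hb1 : g + i < l.length := by omega
      have hb2 : g + i % g < l.length := by omega
      have hb3 : i % g < l.length := by omega
      have e1 : (g + i) % g = i % g := mod_add_cancel i g
      have e2 : (g + i % g) % g = i % g := by
        rw [mod_add_cancel (i % g) g]; exact mod_mod_self' i g
      calc (l.drop g)[i] = l[g + i]'hb1 := List.getElem_drop ..
        _ = l[(g+i) % g]'(by rw [e1]; omega) := hper _ hb1 (by rw [e1]; omega)
        _ = l[i % g]'hb3 := getElem_idx_congr l e1 _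
        _ = l[(g + i % g) % g]'(by rw [e2]; omega) := (getElem_idx_congr l e2 _).symm
        _ = l[g + i % g]'hb2 := (hper _ hb2 (by rw [e2]; omega)).symm
        _ = (l.drop g)[i % g]'(by rw [hlen]; omega) := (List.getElem_drop ..).symm
    have hrec := ih (l.drop g) hlen hper'
    rcases Nat.eq_zero_or_pos q with hq0 | hq
    · subst hq0
      rw [hcnt, hrec]; ring
    · have htake : (l.drop g).take g = l.take g := by
        apply List.ext_getElem
        · rw [List.length_take, List.length_take, hlen]
          have : g ≤ q * g := Nat.le_mul_of_pos_left g hq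
          omega
        · intro i hi1 hi2
          rw [List.length_take] at hi1
          have hig : i < g := by omega
          have hb1 : g + i < l.length := by omega
          have e1 : (g + i) % g = i := by
            rw [mod_add_cancel i g]; exact Nat.mod_eq_of_lt hig
          rw [List.getElem_take, List.getElem_take]
          calc (l.drop g)[i]'(by rw [hlen]; omega) = l[g + i]'hb1 := List.getElem_drop ..
            _ = l[(g+i) % g]'(by rw [e1]; omega) := hper _ hb1 (by rw [e1]; omega)
            _ = l[i]'(by omega) := getElem_idx_congr l e1 _
      rw [hcnt, hrec, htake]; ring
end Count
section Cyc
variable {Q L : Type}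

/-- Main generic lemma: a marking sequence tracing the cycle of `w` with deterministic
steps and prime Parikh vector yields a reachability graph isomorphic to the circular LTS. -/
theorem cyc_solves [Fintype L] [DecidableEq L] (w : List L) (hw : 0 < w.length)
    (hprime : primeVec (fun t => parikh w t))
    (N : PetriNet Q L) (M : ℕ → Q → ℕ)
    (h0 : M w.length = M 0)
    (hstep : ∀ j (hj : j < w.length) t M',
      N.step (M j) t M' ↔ (t = w[j] ∧ M' = M (j+1))) :
    ltsIso (N.RG (M 0)) (circLTS w hw) := by
  have hMc : ∀ i, M ((i+1) % w.length) = M (i % w.length + 1) := by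
    intro i
    have hi := Nat.mod_lt i hw
    rcases Nat.lt_or_ge (i % w.length + 1) w.length with h | h
    · rw [mod_succ_eq, Nat.mod_eq_of_lt h]
    · have h1 : i % w.length + 1 = w.length := by omega
      rw [mod_succ_eq, h1, Nat.mod_self, h0]
  have hstepc : ∀ i t M', N.step (M (i % w.length)) t M' ↔
      (t = w[i % w.length]'(Nat.mod_lt _ hw) ∧ M' = M ((i+1) % w.length)) := by
    intro i t M'
    rw [hstep (i % w.length) (Nat.mod_lt _ hw) t M', hMc i]
  have minj : ∀ j (hj : j < w.length) j' (hj' : j' < w.length), M j = M j' → j = j' := by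
    have prop : ∀ i i', M (i % w.length) = M (i' % w.length) →
        (w[i % w.length]'(Nat.mod_lt _ hw) = w[i' % w.length]'(Nat.mod_lt _ hw)
          ∧ M ((i+1) % w.length) = M ((i'+1) % w.length)) := by
      intro i i' he
      have hs : N.step (M (i % w.length)) (w[i % w.length]'(Nat.mod_lt _ hw))
          (M ((i+1) % w.length)) := (hstepc i _ _).mpr ⟨rfl, rfl⟩
      rw [he] at hs
      obtain ⟨h1, h2⟩ := (hstepc i' _ _).mp hs
      exact ⟨h1, h2⟩
    intro j hj j' hj' he
    by_contra hne
    have key : ∀ j j', j < j' → j' < w.length → M j = M j' → False := by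
      clear he hne hj hj' j j'
      intro j j' hlt hj' he
      have hj : j < w.length := by omega
      set d := j' - j with hd
      have hdpos : 0 < d := by omega
      have hdn : d < w.length := by omega
      have claim : ∀ i, M ((j + i) % w.length) = M ((j' + i) % w.length) := by
        intro i
        induction i with
        | zero =>
          rw [show j + 0 = j by omega, show j' + 0 = j' by omega,
            Nat.mod_eq_of_lt hj, Nat.mod_eq_of_lt hj']
          exact he
        | succ i ih =>
          have hp := (prop (j + i) (j' + i) ih).2
          rw [show j + i + 1 = j + (i+1) by omega, show j' + i + 1 = j' + (i+1) by omega] at hp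
          exact hp
      have hper_d : ∀ r, w[r % w.length]'(Nat.mod_lt _ hw)
          = w[(r + d) % w.length]'(Nat.mod_lt _ hw) := by
        intro r
        have hc := (prop (j + (r + w.length - j)) (j' + (r + w.length - j))
          (claim (r + w.length - j))).1
        have e1 : (j + (r + w.length - j)) % w.length = r % w.length := by
          rw [show j + (r + w.length - j) = r + w.length by omega, Nat.add_mod_right]
        have e2 : (j' + (r + w.length - j)) % w.length = (r + d) % w.length := by
          rw [show j' + (r + w.length - j) = (r + d) + w.length by omega, Nat.add_mod_right]
        calc w[r % w.length]'(Nat.mod_lt _ hw)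
            = w[(j + (r + w.length - j)) % w.length]'(Nat.mod_lt _ hw) :=
              (getElem_idx_congr w e1 _).symm
          _ = w[(j' + (r + w.length - j)) % w.length]'(Nat.mod_lt _ hw) := hc
          _ = w[(r + d) % w.length]'(Nat.mod_lt _ hw) := getElem_idx_congr w e2 _
      have perAdd : ∀ x y,
          (∀ r, w[r % w.length]'(Nat.mod_lt _ hw) = w[(r + x) % w.length]'(Nat.mod_lt _ hw)) →
          (∀ r, w[r % w.length]'(Nat.mod_lt _ hw) = w[(r + y) % w.length]'(Nat.mod_lt _ hw)) →
          (∀ r, w[r % w.length]'(Nat.mod_lt _ hw)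
            = w[(r + (x + y)) % w.length]'(Nat.mod_lt _ hw)) := by
        intro x y hx hy r
        calc w[r % w.length]'(Nat.mod_lt _ hw)
            = w[(r + x) % w.length]'(Nat.mod_lt _ hw) := hx r
          _ = w[(r + x + y) % w.length]'(Nat.mod_lt _ hw) := hy (r + x)
          _ = w[(r + (x + y)) % w.length]'(Nat.mod_lt _ hw) :=
              getElem_idx_congr w (by rw [Nat.add_assoc]) _
      have perMul : ∀ (c x : ℕ),
          (∀ r, w[r % w.length]'(Nat.mod_lt _ hw) = w[(r + x) % w.length]'(Nat.mod_lt _ hw)) →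
          (∀ r, w[r % w.length]'(Nat.mod_lt _ hw)
            = w[(r + c * x) % w.length]'(Nat.mod_lt _ hw)) := by
        intro c
        induction c with
        | zero => intro x _ r; exact getElem_idx_congr w (by rw [Nat.zero_mul, Nat.add_zero]) _
        | succ c ih =>
          intro x hx r
          have h1 := perAdd (c * x) x (ih x hx) (hx) r
          calc w[r % w.length]'(Nat.mod_lt _ hw)
              = w[(r + (c * x + x)) % w.length]'(Nat.mod_lt _ hw) := h1
            _ = w[(r + (c+1) * x) % w.length]'(Nat.mod_lt _ hw) :=
                getElem_idx_congr w (by ring_nf) _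
      have perN : ∀ r, w[r % w.length]'(Nat.mod_lt _ hw)
          = w[(r + w.length) % w.length]'(Nat.mod_lt _ hw) :=
        fun r => (getElem_idx_congr w (Nat.add_mod_right r w.length) _).symm
      have perGcd : ∀ x, ∀ y,
          (∀ r, w[r % w.length]'(Nat.mod_lt _ hw) = w[(r + x) % w.length]'(Nat.mod_lt _ hw)) →
          (∀ r, w[r % w.length]'(Nat.mod_lt _ hw) = w[(r + y) % w.length]'(Nat.mod_lt _ hw)) →
          (∀ r, w[r % w.length]'(Nat.mod_lt _ hw)
            = w[(r + Nat.gcd x y) % w.length]'(Nat.mod_lt _ hw)) := by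
        intro x
        induction x using Nat.strong_induction_on with
        | _ x ih =>
          intro y hx hy
          rcases Nat.eq_zero_or_pos x with h0x | h0x
          · subst h0x; rw [Nat.gcd_zero_left]; exact hy
          · rw [Nat.gcd_rec x y]
            have hymod : ∀ r, w[r % w.length]'(Nat.mod_lt _ hw)
                = w[(r + y % x) % w.length]'(Nat.mod_lt _ hw) := by
              intro r
              have harg : r + y % x + x * (y / x) = r + y := by
                have := Nat.mod_add_div y x
                omega
              calc w[r % w.length]'(Nat.mod_lt _ hw)
                  = w[(r + y) % w.length]'(Nat.mod_lt _ hw) := hy r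
                _ = w[(r + y % x + x * (y / x)) % w.length]'(Nat.mod_lt _ hw) :=
                    (getElem_idx_congr w (by rw [harg]) _).symm
                _ = w[(r + y % x + (y / x) * x) % w.length]'(Nat.mod_lt _ hw) :=
                    getElem_idx_congr w (by rw [Nat.mul_comm]) _
                _ = w[(r + y % x) % w.length]'(Nat.mod_lt _ hw) :=
                    (perMul (y / x) x hx (r + y % x)).symm
            exact ih (y % x) (Nat.mod_lt _ h0x) x hymod hx
      set g := Nat.gcd d w.length with hg
      have hper_g := perGcd d w.length hper_d perN
      have hgpos : 0 < g := Nat.gcd_pos_of_pos_left _ hdpos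
      have hgdvd : g ∣ w.length := Nat.gcd_dvd_right d w.length
      have hgd : g ≤ d := Nat.le_of_dvd hdpos (Nat.gcd_dvd_left d w.length)
      have hgn : g < w.length := by omega
      have hmodg : ∀ i (h : i < w.length) (h' : i % g < w.length), w[i] = w[i % g] := by
        intro i
        induction i using Nat.strong_induction_on with
        | _ i ih =>
          intro h h'
          rcases Nat.lt_or_ge i g with hig | hig
          · exact getElem_idx_congr w (Nat.mod_eq_of_lt hig).symm _
          · have h1 := hper_g (i - g)
            have e1 : (i - g) % w.length = i - g := Nat.mod_eq_of_lt (by omega)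
            have e2 : (i - g + g) % w.length = i := by
              rw [show i - g + g = i by omega]; exact Nat.mod_eq_of_lt h
            have key1 : w[i] = w[i-g]'(by omega) := by
              calc w[i] = w[(i - g + g) % w.length]'(Nat.mod_lt _ hw) :=
                    (getElem_idx_congr w e2 _).symm
                _ = w[(i-g) % w.length]'(Nat.mod_lt _ hw) := (h1).symm
                _ = w[i-g]'(by omega) := getElem_idx_congr w e1 _
            have key2 := ih (i - g) (by omega) (by omega)
              (by have := Nat.mod_lt (i-g) hgpos; omega)
            have e3 : (i - g) % g = i % g := mod_sub_cancel i g hig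
            exact key1.trans (key2.trans (getElem_idx_congr w e3 _))
      have hcnt : ∀ t : L, w.count t = (w.length / g) * (w.take g).count t := by
        intro t
        exact count_periodic_aux g hgpos t (w.length / g) w
          (by rw [Nat.div_mul_cancel hgdvd]) (fun i h h' => hmodg i h h')
      have hdvd : (w.length / g) ∣ Finset.univ.gcd (fun t => parikh w t) :=
        Finset.dvd_gcd (fun t _ => ⟨(w.take g).count t, hcnt t⟩)
      rw [hprime] at hdvd
      have h1 : w.length / g = 1 := Nat.dvd_one.mp hdvd
      have h2 : w.length = g := by
        have := Nat.div_mul_cancel hgdvd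
        rw [h1, Nat.one_mul] at this
        omega
      omega
    rcases Nat.lt_or_ge j j' with h | h
    · exact key j j' h hj' he
    · rcases Nat.lt_or_ge j' j with h' | h'
      · exact key j' j h' hj he.symm
      · omega
  -- reachability characterization
  have hreach_fwd : ∀ j, j ≤ w.length → N.Reach (M 0) (M j) := by
    intro j
    induction j with
    | zero => intro _; exact Relation.ReflTransGen.refl
    | succ j ih =>
      intro hj
      have hjlt : j < w.length := by omega
      exact (ih (by omega)).tail ⟨w[j], (hstep j hjlt _ _).mpr ⟨rfl, rfl⟩⟩
  have hreach : ∀ X, N.Reach (M 0) X → ∃ j, ∃ _ : j < w.length, X = M j := by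
    intro X hX
    induction hX with
    | refl => exact ⟨0, hw, rfl⟩
    | tail hr hs ih =>
      obtain ⟨j, hj, rfl⟩ := ih
      obtain ⟨t, ht⟩ := hs
      obtain ⟨-, rfl⟩ := (hstep j hj _ _).mp ht
      rcases Nat.lt_or_ge (j+1) w.length with h | h
      · exact ⟨j+1, h, rfl⟩
      · have : j + 1 = w.length := by omega
        exact ⟨0, hw, by rw [this, h0]⟩
  -- the isomorphism
  have hbij : Function.Bijective
      (fun j : Fin w.length => (⟨M j.1, hreach_fwd j.1 (le_of_lt j.2)⟩ :
        {X // N.Reach (M 0) X})) := by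
    constructor
    · intro j j' hjj
      exact Fin.ext (minj j.1 j.2 j'.1 j'.2 (Subtype.ext_iff.mp hjj))
    · rintro ⟨X, hX⟩
      obtain ⟨j, hj, rfl⟩ := hreach X hX
      exact ⟨⟨j, hj⟩, rfl⟩
  set f := Equiv.ofBijective _ hbij with hf
  refine ⟨f.symm, ?_, ?_⟩
  · have : (N.RG (M 0)).init = f ⟨0, hw⟩ := Subtype.ext rfl
    rw [this, Equiv.symm_apply_apply]
    rfl
  · intro X t X'
    have hX : X = f (f.symm X) := (Equiv.apply_symm_apply f X).symm
    have hX' : X' = f (f.symm X') := (Equiv.apply_symm_apply f X').symm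
    set j := f.symm X with hj
    set j' := f.symm X' with hj'
    have hXv : X.1 = M j.1 := by rw [hX]; rfl
    have hX'v : X'.1 = M j'.1 := by rw [hX']; rfl
    show N.step X.1 t X'.1 ↔ (t = w.get j ∧ (j' : ℕ) = (j.1 + 1) % w.length)
    rw [hXv, hX'v, hstep j.1 j.2 t (M j'.1)]
    constructor
    · rintro ⟨rfl, he⟩
      refine ⟨rfl, ?_⟩
      have h2 : M j'.1 = M ((j.1+1) % w.length) := by
        rcases Nat.lt_or_ge (j.1+1) w.length with h | h
        · rw [Nat.mod_eq_of_lt h]; exact he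
        · have hh : j.1 + 1 = w.length := by omega
          have h4 : (j.1 + 1) % w.length = 0 := by rw [hh]; exact Nat.mod_self _
          have h3 : M (j.1 + 1) = M 0 := by rw [hh]; exact h0
          rw [h4]; exact he.trans h3
      exact minj j'.1 j'.2 _ (Nat.mod_lt _ hw) h2
    · rintro ⟨rfl, he⟩
      refine ⟨rfl, ?_⟩
      have h2 : M j'.1 = M ((j.1+1) % w.length) := by rw [he]
      rcases Nat.lt_or_ge (j.1+1) w.length with h | h
      · rw [← Nat.mod_eq_of_lt h]; exact h2
      · have hh : j.1 + 1 = w.length := by omega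
        have h4 : (j.1 + 1) % w.length = 0 := by rw [hh]; exact Nat.mod_self _
        have h3 : M (j.1 + 1) = M 0 := by rw [hh]; exact h0
        rw [h4] at h2
        exact h2.trans h3.symm
end Cyc
section Transport
variable {Q Q' T S : Type}

/-- Transport of a Petri net along an equivalence of place sets. -/
def transNet (e : Q ≃ Q') (N : PetriNet Q T) : PetriNet Q' T where
  pre := fun q' t => N.pre (e.symm q') t
  post := fun t q' => N.post t (e.symm q')

theorem transNet_step (e : Q ≃ Q') (N : PetriNet Q T) (m m' : Q → ℕ) (t : T) :
    N.step m t m' ↔ (transNet e N).step (fun q' => m (e.symm q')) t (fun q' => m' (e.symm q')) := by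
  constructor
  · rintro ⟨hen, rfl⟩
    exact ⟨fun q' => hen (e.symm q'), rfl⟩
  · rintro ⟨hen, hf⟩
    refine ⟨fun q => by simpa [transNet] using hen (e q), ?_⟩
    funext q
    have := congrFun hf (e q)
    simpa [PetriNet.fire, transNet] using this
end Transport

section Transport2
variable {Q Q' T S : Type}

theorem transNet_solves (e : Q ≃ Q') (N : PetriNet Q T) (M0 : Q → ℕ) (A : LTS S T)
    (h : Solves N M0 A) :
    Solves (transNet e N) (fun q' => M0 (e.symm q')) A := by
  obtain ⟨ζ, hinit, htr⟩ := h
  set φ : (Q → ℕ) → (Q' → ℕ) := fun m q' => m (e.symm q') with hφ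
  set ψ : (Q' → ℕ) → (Q → ℕ) := fun m q => m (e q) with hψ
  have hφψ : ∀ m', φ (ψ m') = m' := by
    intro m'; funext q'; simp [hφ, hψ]
  have hψφ : ∀ m, ψ (φ m) = m := by
    intro m; funext q; simp [hφ, hψ]
  have hstep : ∀ m t m', N.step m t m' ↔ (transNet e N).step (φ m) t (φ m') :=
    fun m t m' => transNet_step e N m m' t
  have hr1 : ∀ m, N.Reach M0 m → (transNet e N).Reach (φ M0) (φ m) := by
    intro m hm
    induction hm with
    | refl => exact Relation.ReflTransGen.refl
    | tail _ hs ih =>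
      obtain ⟨t, ht⟩ := hs
      exact ih.tail ⟨t, (hstep _ t _).mp ht⟩
  have hr2 : ∀ m', (transNet e N).Reach (φ M0) m' → N.Reach M0 (ψ m') := by
    intro m' hm'
    induction hm' with
    | refl => rw [hψφ]; exact Relation.ReflTransGen.refl
    | tail _ hs ih =>
      obtain ⟨t, ht⟩ := hs
      refine ih.tail ⟨t, ?_⟩
      rename_i b c _
      have hb : b = φ (ψ b) := (hφψ b).symm
      have hc : c = φ (ψ c) := (hφψ c).symm
      rw [hb, hc] at ht
      exact (hstep _ t _).mpr ht
  refine ⟨Equiv.trans ?_ ζ, ?_, ?_⟩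
  · -- subtype equiv
    refine ⟨fun Y => ⟨ψ Y.1, hr2 Y.1 Y.2⟩, fun X => ⟨φ X.1, hr1 X.1 X.2⟩, ?_, ?_⟩
    · intro Y; exact Subtype.ext (hφψ Y.1)
    · intro X; exact Subtype.ext (hψφ X.1)
  · show ζ ⟨ψ (φ M0), _⟩ = A.init
    rw [← hinit]
    congr 1
    exact Subtype.ext (hψφ M0)
  · intro Y t Y'
    show (transNet e N).step Y.1 t Y'.1 ↔ A.tr (ζ ⟨ψ Y.1, _⟩) t (ζ ⟨ψ Y'.1, _⟩)
    rw [← htr ⟨ψ Y.1, _⟩ t ⟨ψ Y'.1, _⟩]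
    show _ ↔ N.step (ψ Y.1) t (ψ Y'.1)
    rw [hstep (ψ Y.1) t (ψ Y'.1), hφψ, hφψ]
end Transport2
section Rot
variable {L : Type}

theorem rot_length (w : List L) (j : ℕ) (hj : j ≤ w.length) :
    (w.drop j ++ w.take j).length = w.length := by
  rw [List.length_append, List.length_drop, List.length_take]
  omega

theorem rot_getElem (w : List L) (hw : 0 < w.length) (j : ℕ) (hj : j ≤ w.length)
    (i : ℕ) (hi : i < w.length) :
    (w.drop j ++ w.take j)[i]'(by rw [rot_length w j hj]; exact hi)
      = w[(j+i) % w.length]'(Nat.mod_lt _ hw) := by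
  rcases Nat.lt_or_ge i (w.length - j) with h | h
  · have hlt : i < (w.drop j).length := by rw [List.length_drop]; omega
    have e1 : (j + i) % w.length = j + i := Nat.mod_eq_of_lt (by omega)
    calc (w.drop j ++ w.take j)[i]'_ = (w.drop j)[i]'hlt := List.getElem_append_left hlt
      _ = w[j + i]'(by omega) := List.getElem_drop ..
      _ = w[(j+i) % w.length]'(Nat.mod_lt _ hw) := (getElem_idx_congr w e1 _).symm
  · have hge : (w.drop j).length ≤ i := by rw [List.length_drop]; omega
    have hjt : (w.take j).length = j := by rw [List.length_take]; omega
    have hlt2 : i - (w.drop j).length < (w.take j).length := by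
      rw [List.length_drop, hjt]; omega
    have e1 : (j + i) % w.length = i - (w.length - j) := by
      rw [show j + i = (j + i - w.length) + w.length by omega, Nat.add_mod_right]
      rw [Nat.mod_eq_of_lt (by omega)]
      omega
    calc (w.drop j ++ w.take j)[i]'_
        = (w.take j)[i - (w.drop j).length]'hlt2 := List.getElem_append_right hge
      _ = w[i - (w.drop j).length]'(by omega) := List.getElem_take ..
      _ = w[(j+i) % w.length]'(Nat.mod_lt _ hw) := by
          refine (getElem_idx_congr w ?_ _).symm
          rw [e1, List.length_drop]

theorem adj_of_consec (w : List L) (i : ℕ) (h : i + 1 < w.length)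
    (hne : w[i] ≠ w[i+1]) : cAdj w w[i] w[i+1] := by
  refine ⟨hne, Or.inl ⟨w.take i, w.drop (i+2), ?_⟩⟩
  conv_lhs => rw [← List.take_append_drop i w]
  congr 1
  rw [List.drop_eq_getElem_cons (by omega : i < w.length)]
  congr 1
  rw [List.drop_eq_getElem_cons (by omega : i + 1 < w.length)]

theorem adj_wrap (w : List L) (h : 1 < w.length)
    (hne : w[w.length - 1]'(by omega) ≠ w[0]'(by omega)) :
    cAdj w (w[w.length - 1]'(by omega)) (w[0]'(by omega)) := by
  have hd1 : 0 < (w.drop 1).length := by rw [List.length_drop]; omega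
  refine ⟨hne, Or.inr ⟨(w.drop 1).dropLast, ?_⟩⟩
  have e0 : w = w[0]'(by omega) :: w.drop 1 := by
    conv_lhs => rw [← List.drop_zero (l := w), List.drop_eq_getElem_cons (by omega : 0 < w.length)]
  conv_lhs => rw [e0]
  congr 1
  have hlast : (w.drop 1).getLast (List.ne_nil_of_length_pos hd1) = w[w.length - 1]'(by omega) := by
    rw [List.getLast_eq_getElem]
    have : (w.drop 1).length - 1 = w.length - 2 := by rw [List.length_drop]; omega
    calc (w.drop 1)[(w.drop 1).length - 1]'(by omega)
        = w[1 + ((w.drop 1).length - 1)]'(by rw [List.length_drop]; omega) := List.getElem_drop ..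
      _ = w[w.length - 1]'(by omega) := getElem_idx_congr w (by rw [List.length_drop]; omega) _
  rw [← hlast]
  exact (List.dropLast_append_getLast _).symm
end Rot
section Adj
variable {L : Type} [DecidableEq L]

open Classical in
/-- For any `t` occurring in `w` but not at position `j`, there is a letter `s` with
`(s,t)` circularly adjacent in `w` such that the first `{s,t}`-letter of the rotation
of `w` at `j` is `s`. -/
theorem exists_adj (w : List L) (hw : 0 < w.length) (j : ℕ) (hj : j < w.length) (t : L)
    (ht : t ∈ w) (hne : w[j] ≠ t) :
    ∃ s, cAdj w s t ∧
      ∃ h0 : 0 < (projPair (w.drop j ++ w.take j) s t).length,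
        ((projPair (w.drop j ++ w.take j) s t)[0]'h0).val = s := by
  obtain ⟨p, hp, hpt⟩ := List.mem_iff_getElem.mp ht
  have hpj : p ≠ j := by intro h; subst h; exact hne hpt
  -- an index i1 with (j+1+i1) % n = p and i1 < n
  have hshift : ∀ x, x < w.length → ∃ i1, i1 < w.length ∧ (x + i1) % w.length = p := by
    intro x hx
    rcases Nat.lt_or_ge p x with h | h
    · refine ⟨p + w.length - x, by omega, ?_⟩
      rw [show x + (p + w.length - x) = p + w.length by omega, Nat.add_mod_right]
      exact Nat.mod_eq_of_lt hp
    · refine ⟨p - x, by omega, ?_⟩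
      rw [show x + (p - x) = p by omega]
      exact Nat.mod_eq_of_lt hp
  have hex : ∃ D, ∃ _ : (j+1+D) % w.length < w.length, w[(j+1+D) % w.length] = t := by
    obtain ⟨i1, hi1n, hi1⟩ := hshift ((j+1) % w.length) (Nat.mod_lt _ hw)
    refine ⟨i1, Nat.mod_lt _ hw, ?_⟩
    have e1 : (j+1+i1) % w.length = p := by
      rw [← Nat.mod_add_mod]; exact hi1
    exact (getElem_idx_congr w e1 _).trans hpt
  set D := Nat.find hex with hD
  obtain ⟨hDlt', hDt⟩ := Nat.find_spec hex
  have hDmin : ∀ i, i < D → w[(j+1+i) % w.length]'(Nat.mod_lt _ hw) ≠ t :=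
    fun i hi => by
      have := Nat.find_min hex hi
      push_neg at this
      exact this (Nat.mod_lt _ hw)
  have hDn : D < w.length := by
    obtain ⟨i1, hi1n, hi1⟩ := hshift ((j+1) % w.length) (Nat.mod_lt _ hw)
    have e1 : (j+1+i1) % w.length = p := by rw [← Nat.mod_add_mod]; exact hi1
    have : D ≤ i1 := Nat.find_min' hex ⟨Nat.mod_lt _ hw, (getElem_idx_congr w e1 _).trans hpt⟩
    omega
  set i0 := (j + D) % w.length with hi0
  have hi0lt : i0 < w.length := Nat.mod_lt _ hw
  set s := w[i0] with hs
  have hst : s ≠ t := by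
    rcases Nat.eq_zero_or_pos D with h0 | h0
    · have e : i0 = j := by rw [hi0, h0, Nat.add_zero]; exact Nat.mod_eq_of_lt hj
      intro hc
      exact hne ((getElem_idx_congr w e.symm hj).trans (hs ▸ hc))
    · have h1 := hDmin (D - 1) (by omega)
      rw [show j + 1 + (D-1) = j + D by omega] at h1
      intro hc
      exact h1 (hs ▸ hc)
  have htnext : w[(i0 + 1) % w.length]'(Nat.mod_lt _ hw) = t := by
    have e1 : (i0 + 1) % w.length = (j+1+D) % w.length := by
      rw [hi0, Nat.mod_add_mod]
      congr 1
      omega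
    exact (getElem_idx_congr w e1 _).trans hDt
  have hadj : cAdj w s t := by
    rcases Nat.lt_or_ge (i0 + 1) w.length with h | h
    · have e1 : (i0+1) % w.length = i0 + 1 := Nat.mod_eq_of_lt h
      have ht' : w[i0+1] = t := (getElem_idx_congr w e1.symm h).trans htnext
      rw [hs, ← ht']
      exact adj_of_consec w i0 h (by rw [ht']; rw [hs] at hst; exact hst)
    · have hlen1 : i0 + 1 = w.length := by omega
      have hn2 : 1 < w.length := by
        by_contra h2
        push_neg at h2
        have hi00 : i0 = 0 := by omega
        have e2 : (i0+1) % w.length = i0 := by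
          rw [hi00] at hlen1 ⊢
          rw [← hlen1]
        exact hst ((hs.trans (getElem_idx_congr w e2.symm hi0lt)).trans htnext)
      have e1 : (i0+1) % w.length = 0 := by rw [hlen1]; exact Nat.mod_self _
      have ht0 : w[0]'(by omega) = t := (getElem_idx_congr w e1.symm (by omega)).trans htnext
      have hsl : w[w.length - 1]'(by omega) = s := by
        rw [hs]; exact getElem_idx_congr w (by omega) _
      rw [← ht0, ← hsl]
      exact adj_wrap w hn2 (by rw [ht0, hsl]; exact hst)
  refine ⟨s, hadj, ?_⟩
  have hrotlen : (w.drop j ++ w.take j).length = w.length := rot_length w j (le_of_lt hj)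
  have hrotD : (w.drop j ++ w.take j)[D]'(by omega) = s := by
    rw [rot_getElem w hw j (le_of_lt hj) D hDn]
  have hrotnot : ∀ i (hi : i ≤ D), (w.drop j ++ w.take j)[i]'(by omega) ≠ t := by
    intro i hi
    rw [rot_getElem w hw j (le_of_lt hj) i (by omega)]
    rcases Nat.eq_zero_or_pos i with h0 | h0
    · have e : (j + i) % w.length = j := by rw [h0, Nat.add_zero]; exact Nat.mod_eq_of_lt hj
      intro hc
      exact hne ((getElem_idx_congr w e.symm hj).trans hc)
    · rcases Nat.lt_or_ge i D with h | h
      · have h1 := hDmin (i - 1) (by omega)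
        rw [show j + 1 + (i-1) = j + i by omega] at h1
        exact h1
      · have hiD : i = D := by omega
        intro hc
        apply hst
        rw [hs]
        refine (getElem_idx_congr w ?_ hi0lt).trans hc
        rw [hi0, hiD]
  obtain ⟨h1, h2⟩ := projPair_head hst (w.drop j ++ w.take j) D (by omega) hrotD hrotnot
  exact ⟨h1, h2⟩
end Adj
section Next
variable {L : Type} [DecidableEq L] {a b : L}

/-- The letter enabled by the circuit component after the prefix `w.take j` is the head of
the projection of the rotation of `w` at `j`. -/
theorem next_letter (w : List L) (j : ℕ) (hj : j ≤ w.length)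
    (v : List {x : L // x = a ∨ x = b}) (ℓ : ℕ) (hℓ : 0 < ℓ)
    (hproj : projPair w a b = (List.replicate ℓ v).flatten)
    (hne : 0 < (projPair (w.drop j ++ w.take j) a b).length) :
    ∃ hm : 0 < v.length,
      v[(projPair (w.take j) a b).length % v.length]'(Nat.mod_lt _ hm)
        = (projPair (w.drop j ++ w.take j) a b)[0]'hne := by
  set A := projPair (w.take j) a b with hA
  set B := projPair (w.drop j) a b with hB
  have hu : projPair w a b = A ++ B := by
    conv_lhs => rw [← List.take_append_drop j w]
    exact projPair_append _ _
  have hBA : projPair (w.drop j ++ w.take j) a b = B ++ A := projPair_append _ _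
  have hulen : (projPair w a b).length = ℓ * v.length := by
    rw [hproj]; exact len_flatrep ℓ v
  have hlenAB : A.length + B.length = ℓ * v.length := by
    rw [← hulen, hu, List.length_append]
  have hBAlen : (projPair (w.drop j ++ w.take j) a b).length = B.length + A.length := by
    rw [hBA, List.length_append]
  have hm : 0 < v.length := by
    rcases Nat.eq_zero_or_pos v.length with h0 | h0
    · exfalso
      rw [h0, Nat.mul_zero] at hlenAB
      rw [hBAlen] at hne
      omega
    · exact h0
  have hpos : 0 < ℓ * v.length := Nat.mul_pos hℓ hm
  refine ⟨hm, ?_⟩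
  rcases Nat.eq_zero_or_pos B.length with hB0 | hBpos
  · -- B empty: wrap around
    have hAlen : A.length = ℓ * v.length := by omega
    have hc0 : A.length % v.length = 0 := by rw [hAlen]; exact Nat.mul_mod_left ℓ v.length
    have hBnil : B = [] := List.length_eq_zero_iff.mp hB0
    have h0u : 0 < (projPair w a b).length := by omega
    have e1 : v[A.length % v.length]'(Nat.mod_lt _ hm) = v[0]'hm := getElem_idx_congr v hc0 _
    have e2 : (projPair w a b)[0]'h0u = v[0 % v.length]'(Nat.mod_lt _ hm) := by
      rw [List.getElem_of_eq hproj h0u]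
      exact get_flatrep ℓ v 0 (by omega) hm
    have e3 : (projPair w a b)[0]'h0u = A[0]'(by omega) := by
      rw [List.getElem_of_eq hu h0u]
      exact List.getElem_append_left (by omega)
    have e4 : (projPair (w.drop j ++ w.take j) a b)[0]'hne = A[0]'(by omega) := by
      rw [List.getElem_of_eq hBA hne]
      exact List.getElem_of_eq (by rw [hBnil]; exact List.nil_append A) _
    rw [e1, e4, ← e3, e2]
    exact (getElem_idx_congr v (by rw [Nat.zero_mod]) _)
  · -- B nonempty
    have hclt : A.length < ℓ * v.length := by omega
    have e1 : v[A.length % v.length]'(Nat.mod_lt _ hm)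
        = (projPair w a b)[A.length]'(by omega) := by
      rw [List.getElem_of_eq hproj (by omega)]
      exact (get_flatrep ℓ v A.length hclt hm).symm
    have e2 : (projPair w a b)[A.length]'(by omega) = B[0]'hBpos := by
      rw [List.getElem_of_eq hu (by omega)]
      exact (List.getElem_append_right (le_refl A.length)).trans
        (getElem_idx_congr B (by omega) _)
    have e3 : (projPair (w.drop j ++ w.take j) a b)[0]'hne = B[0]'hBpos := by
      rw [List.getElem_of_eq hBA hne]
      exact List.getElem_append_left hBpos
    rw [e1, e2, e3]
end Next
section Comp
variable {L : Type} [DecidableEq L]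

/-- The type of circularly adjacent pairs of `w`. -/
abbrev AdjOf (w : List L) : Type := {p : L × L // cAdj w p.1 p.2}

/-- The two-letter sub-alphabet of an adjacent pair. -/
abbrev PairT (w : List L) (e : AdjOf w) : Type := {x : L // x = e.1.1 ∨ x = e.1.2}

/-- The composition of the circuit solutions of all adjacent pairs of `w`,
together with one place disabling each non-occurring letter. -/
def compNet (w : List L) (kk : AdjOf w → ℕ)
    (NN : ∀ e, PetriNet (Fin (kk e)) (PairT w e)) :
    PetriNet ((Σ e : AdjOf w, Fin (kk e)) ⊕ {t : L // parikh w t = 0}) L where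
  pre := fun q t => Sum.elim
    (fun p : Σ e : AdjOf w, Fin (kk e) =>
      if h : t = p.1.1.1 ∨ t = p.1.1.2 then (NN p.1).pre p.2 ⟨t, h⟩ else 0)
    (fun t0 => if t = t0.1 then 1 else 0) q
  post := fun t q => Sum.elim
    (fun p : Σ e : AdjOf w, Fin (kk e) =>
      if h : t = p.1.1.1 ∨ t = p.1.1.2 then (NN p.1).post ⟨t, h⟩ p.2 else 0)
    (fun _ => 0) q

/-- The composite marking sequence. -/
def compM (w : List L) (kk : AdjOf w → ℕ)
    (NN : ∀ e, PetriNet (Fin (kk e)) (PairT w e))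
    (MM0 : ∀ e, Fin (kk e) → ℕ)
    (vv : ∀ e, List (PairT w e)) (hvv : ∀ e, 0 < (vv e).length) (j : ℕ) :
    ((Σ e : AdjOf w, Fin (kk e)) ⊕ {t : L // parikh w t = 0}) → ℕ :=
  Sum.elim
    (fun p => muSeq (NN p.1) (MM0 p.1) (vv p.1) (hvv p.1)
      ((projPair (w.take j) p.1.1.1 p.1.1.2).length) p.2)
    (fun _ => 0)
end Comp
/-- sufficient condition for cyclic WMG-solvability. -/
theorem stmt2 {L : Type} [Fintype L] [DecidableEq L] (w : List L)
    (hprime : primeVec (fun t => parikh w t))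
    (hadj : ∀ a b : L, cAdj w a b →
      ∃ (v : List {x : L // x = a ∨ x = b}) (ℓ : ℕ), 0 < ℓ ∧
        projPair w a b = (List.replicate ℓ v).flatten ∧
        primeVec (fun t => parikh v t) ∧
        cyclicCircuitSolvable v) :
    cyclicWMGSolvable w := by
  classical
  -- `w` is nonempty
  have hw : 0 < w.length := by
    by_contra h
    push_neg at h
    have hwnil : w = [] := List.length_eq_zero_iff.mp (by omega)
    subst hwnil
    have h0 : Finset.univ.gcd (fun t : L => parikh ([] : List L) t) = 0 :=
      Finset.gcd_eq_zero_iff.mpr (fun t _ => by simp [parikh])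
    have := hprime
    rw [primeVec] at this
    rw [h0] at this
    exact one_ne_zero this.symm
  -- choose the component data
  choose vv ℓℓ hℓ hproj hpv hcirc using fun e : AdjOf w => hadj e.1.1 e.1.2 e.2
  choose hvv kk hkk NN MM0 hcircN hsolve using fun e : AdjOf w => hcirc e
  set NQ := compNet w kk NN with hNQ
  set MQ := compM w kk NN MM0 vv hvv with hMQ
  -- component specifications
  have spec := fun e : AdjOf w => muSeq_spec (NN e) (MM0 e) (vv e) (hvv e) (hsolve e)
  -- counting lemma
  have hcnt : ∀ (e : AdjOf w) j (hj : j < w.length),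
      (projPair (w.take (j+1)) e.1.1 e.1.2).length =
      (projPair (w.take j) e.1.1 e.1.2).length +
        (if w[j] = e.1.1 ∨ w[j] = e.1.2 then 1 else 0) := by
    intro e j hj
    have htake : w.take (j+1) = w.take j ++ [w[j]] := by
      rw [← List.concat_eq_append]
      exact (List.take_concat_get hj).symm
    rw [htake, projPair_append, List.length_append]
    by_cases h : w[j] = e.1.1 ∨ w[j] = e.1.2
    · rw [projPair_cons_mem _ h, if_pos h]
      rfl
    · rw [projPair_cons_not_mem _ h, if_neg h]
      rfl
  -- next-letter lemma, positive case
  have hL2 : ∀ (e : AdjOf w) j (hj : j < w.length) (h : w[j] = e.1.1 ∨ w[j] = e.1.2),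
      (vv e).get ⟨(projPair (w.take j) e.1.1 e.1.2).length % (vv e).length,
        Nat.mod_lt _ (hvv e)⟩ = ⟨w[j], h⟩ := by
    intro e j hj h
    have hrot : w.drop j ++ w.take j = w[j] :: (w.drop (j+1) ++ w.take j) := by
      rw [List.drop_eq_getElem_cons hj]
      rfl
    have hpr : projPair (w.drop j ++ w.take j) e.1.1 e.1.2
        = ⟨w[j], h⟩ :: projPair (w.drop (j+1) ++ w.take j) e.1.1 e.1.2 := by
      rw [hrot]
      exact projPair_cons_mem _ h _
    have hne0 : 0 < (projPair (w.drop j ++ w.take j) e.1.1 e.1.2).length := by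
      rw [hpr]; simp
    obtain ⟨hm, hnl⟩ := next_letter w j (le_of_lt hj) (vv e) (ℓℓ e) (hℓ e) (hproj e) hne0
    have h2 : (projPair (w.drop j ++ w.take j) e.1.1 e.1.2)[0]'hne0 = ⟨w[j], h⟩ := by
      rw [List.getElem_of_eq hpr hne0]
      rfl
    rw [List.get_eq_getElem]
    exact hnl.trans h2
  -- the composite step (positive instance)
  have hstep_pos : ∀ j (hj : j < w.length), NQ.step (MQ j) (w[j]) (MQ (j+1)) := by
    intro j hj
    have hwj_mem : w[j] ∈ w := List.getElem_mem hj
    constructor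
    · -- enabledness
      intro q
      rcases q with p | t0
      · by_cases h : w[j] = p.1.1.1 ∨ w[j] = p.1.1.2
        · have hc := ((spec p.1).1 ((projPair (w.take j) p.1.1.1 p.1.1.2).length)
            _ _).mpr ⟨rfl, rfl⟩
          have hen := hc.1 p.2
          show (if h' : w[j] = p.1.1.1 ∨ w[j] = p.1.1.2 then
            (NN p.1).pre p.2 ⟨w[j], h'⟩ else 0) ≤ _
          rw [dif_pos h]
          rw [← hL2 p.1 j hj h]
          exact hen
        · show (if h' : w[j] = p.1.1.1 ∨ w[j] = p.1.1.2 then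
            (NN p.1).pre p.2 ⟨w[j], h'⟩ else 0) ≤ _
          rw [dif_neg h]
          exact Nat.zero_le _
      · -- dead place
        show (if w[j] = t0.1 then 1 else 0) ≤ 0
        have : w[j] ≠ t0.1 := by
          intro hc
          have h1 : 0 < w.count (w[j]) := List.count_pos_iff.mpr hwj_mem
          have h2 := t0.2
          rw [hc] at h1
          rw [parikh] at h2
          omega
        rw [if_neg this]
    · -- the fired marking
      funext q
      symm
      rcases q with p | t0
      · show MQ j (Sum.inl p) - NQ.pre (Sum.inl p) (w[j]) + NQ.post (w[j]) (Sum.inl p)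
          = MQ (j+1) (Sum.inl p)
        by_cases h : w[j] = p.1.1.1 ∨ w[j] = p.1.1.2
        · have e1 : NQ.pre (Sum.inl p) (w[j]) = (NN p.1).pre p.2 ⟨w[j], h⟩ := by
            show (if h' : _ ∨ _ then (NN p.1).pre p.2 ⟨w[j], h'⟩ else 0) = _
            rw [dif_pos h]
          have e2 : NQ.post (w[j]) (Sum.inl p) = (NN p.1).post ⟨w[j], h⟩ p.2 := by
            show (if h' : _ ∨ _ then (NN p.1).post ⟨w[j], h'⟩ p.2 else 0) = _
            rw [dif_pos h]
          have e3 : MQ (j+1) (Sum.inl p) = muSeq (NN p.1) (MM0 p.1) (vv p.1) (hvv p.1)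
              ((projPair (w.take j) p.1.1.1 p.1.1.2).length + 1) p.2 := by
            show muSeq _ _ _ _ ((projPair (w.take (j+1)) p.1.1.1 p.1.1.2).length) p.2 = _
            rw [hcnt p.1 j hj, if_pos h]
          rw [e1, e2, e3]
          show _ = (NN p.1).fire (muSeq (NN p.1) (MM0 p.1) (vv p.1) (hvv p.1)
            ((projPair (w.take j) p.1.1.1 p.1.1.2).length))
            ((vv p.1).get ⟨_ % (vv p.1).length, _⟩) p.2
          rw [hL2 p.1 j hj h]
          rfl
        · have e1 : NQ.pre (Sum.inl p) (w[j]) = 0 := by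
            show (if h' : _ ∨ _ then (NN p.1).pre p.2 ⟨w[j], h'⟩ else 0) = _
            rw [dif_neg h]
          have e2 : NQ.post (w[j]) (Sum.inl p) = 0 := by
            show (if h' : _ ∨ _ then (NN p.1).post ⟨w[j], h'⟩ p.2 else 0) = _
            rw [dif_neg h]
          have e3 : MQ (j+1) (Sum.inl p) = MQ j (Sum.inl p) := by
            show muSeq _ _ _ _ ((projPair (w.take (j+1)) p.1.1.1 p.1.1.2).length) p.2
              = muSeq _ _ _ _ ((projPair (w.take j) p.1.1.1 p.1.1.2).length) p.2
            rw [hcnt p.1 j hj, if_neg h, Nat.add_zero]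
          rw [e1, e2, e3]
          omega
      · show MQ j (Sum.inr t0) - NQ.pre (Sum.inr t0) (w[j]) + 0 = MQ (j+1) (Sum.inr t0)
        show 0 - NQ.pre (Sum.inr t0) (w[j]) + 0 = 0
        omega
  -- the composite step characterization
  have hstep : ∀ j (hj : j < w.length) t M',
      NQ.step (MQ j) t M' ↔ (t = w[j] ∧ M' = MQ (j+1)) := by
    intro j hj t M'
    constructor
    · intro hst
      have htocc : w.count t ≠ 0 := by
        intro h0
        have hen := hst.1 (Sum.inr ⟨t, h0⟩)
        show False
        have : (1 : ℕ) ≤ 0 := by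
          have h1 : NQ.pre (Sum.inr ⟨t, h0⟩) t = 1 := by
            show (if t = t then 1 else 0) = 1
            rw [if_pos rfl]
          rw [h1] at hen
          exact hen
        omega
      have htmem : t ∈ w := List.count_pos_iff.mp (by omega)
      by_cases hteq : t = w[j]
      · subst hteq
        exact ⟨rfl, hst.2.trans (hstep_pos j hj).2.symm⟩
      · exfalso
        obtain ⟨s, hadj', hh0, hhead⟩ := exists_adj w hw j hj t htmem
          (fun hc => hteq hc.symm)
        set e : AdjOf w := ⟨(s, t), hadj'⟩ with he
        have hpair : t = e.1.1 ∨ t = e.1.2 := Or.inr rfl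
        -- t is enabled in component e
        have hen : (NN e).enabled (muSeq (NN e) (MM0 e) (vv e) (hvv e)
            ((projPair (w.take j) e.1.1 e.1.2).length)) ⟨t, hpair⟩ := by
          intro i
          have := hst.1 (Sum.inl ⟨e, i⟩)
          show (NN e).pre i ⟨t, hpair⟩ ≤ _
          have h1 : NQ.pre (Sum.inl ⟨e, i⟩) t = (NN e).pre i ⟨t, hpair⟩ := by
            show (if h' : _ ∨ _ then (NN e).pre i ⟨t, h'⟩ else 0) = _
            rw [dif_pos hpair]
          rw [h1] at this
          exact this
        have hcstep : (NN e).step (muSeq (NN e) (MM0 e) (vv e) (hvv e)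
            ((projPair (w.take j) e.1.1 e.1.2).length)) ⟨t, hpair⟩
            ((NN e).fire _ ⟨t, hpair⟩) := ⟨hen, rfl⟩
        have hteqv := ((spec e).1 _ _ _).mp hcstep
        obtain ⟨hnl', hm⟩ := next_letter w j (le_of_lt hj) (vv e) (ℓℓ e) (hℓ e)
          (hproj e) hh0
        -- the next letter in component e has value s
        have hval : ((vv e).get ⟨(projPair (w.take j) e.1.1 e.1.2).length % (vv e).length,
            Nat.mod_lt _ (hvv e)⟩).val = s := by
          rw [List.get_eq_getElem]
          calc ((vv e)[(projPair (w.take j) e.1.1 e.1.2).length % (vv e).length]'_).val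
              = ((projPair (w.drop j ++ w.take j) e.1.1 e.1.2)[0]'hh0).val := by rw [hm]
            _ = s := hhead
        rw [← hteqv.1] at hval
        exact hadj'.1 hval.symm
    · rintro ⟨rfl, rfl⟩
      exact hstep_pos j hj
  -- return to the initial marking
  have h0 : MQ w.length = MQ 0 := by
    funext q
    rcases q with p | t0
    · show muSeq (NN p.1) (MM0 p.1) (vv p.1) (hvv p.1)
          ((projPair (w.take w.length) p.1.1.1 p.1.1.2).length) p.2
        = muSeq (NN p.1) (MM0 p.1) (vv p.1) (hvv p.1)
          ((projPair (w.take 0) p.1.1.1 p.1.1.2).length) p.2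
      have e1 : w.take w.length = w := List.take_length
      have e2 : (projPair (w.take w.length) p.1.1.1 p.1.1.2).length
          = ℓℓ p.1 * (vv p.1).length := by
        rw [e1, hproj p.1, len_flatrep]
      have e3 : (projPair (w.take 0) p.1.1.1 p.1.1.2).length = 0 := by
        rw [List.take_zero]
        rfl
      rw [e2, e3]
      have := (spec p.1).2 (ℓℓ p.1 * (vv p.1).length)
      rw [this, Nat.mul_mod_left]
    · rfl
  -- conclusion via the cycle lemma
  have hiso : ltsIso (NQ.RG (MQ 0)) (circLTS w hw) :=
    cyc_solves w hw hprime NQ MQ h0 hstep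
  -- the composite net is a WMG
  have hwmg : NQ.wmg := by
    constructor
    · intro q t t' h1 h2
      rcases q with p | t0
      · obtain ⟨τ, hτpre, hτpost⟩ := hcircN p.1
        have f : ∀ u (hu : 0 < NQ.pre (Sum.inl p) u), u = (τ p.2).val := by
          intro u hu
          by_cases h : u = p.1.1.1 ∨ u = p.1.1.2
          · have : NQ.pre (Sum.inl p) u = (NN p.1).pre p.2 ⟨u, h⟩ := by
              show (if h' : _ ∨ _ then (NN p.1).pre p.2 ⟨u, h'⟩ else 0) = _
              rw [dif_pos h]
            rw [this] at hu
            have := (hτpre p.2 ⟨u, h⟩).mp hu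
            exact congrArg Subtype.val this
          · have : NQ.pre (Sum.inl p) u = 0 := by
              show (if h' : _ ∨ _ then (NN p.1).pre p.2 ⟨u, h'⟩ else 0) = _
              rw [dif_neg h]
            rw [this] at hu
            omega
        rw [f t h1, f t' h2]
      · have f : ∀ u (hu : 0 < NQ.pre (Sum.inr t0) u), u = t0.1 := by
          intro u hu
          by_cases h : u = t0.1
          · exact h
          · have : NQ.pre (Sum.inr t0) u = 0 := by
              show (if u = t0.1 then 1 else 0) = 0
              rw [if_neg h]
            rw [this] at hu
            omega
        rw [f t h1, f t' h2]
    · intro q t t' h1 h2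
      rcases q with p | t0
      · obtain ⟨τ, hτpre, hτpost⟩ := hcircN p.1
        have f : ∀ u (hu : 0 < NQ.post u (Sum.inl p)), u = (τ ⟨(p.2.val + kk p.1 - 1) % kk p.1,
            Nat.mod_lt _ (hkk p.1)⟩).val := by
          intro u hu
          by_cases h : u = p.1.1.1 ∨ u = p.1.1.2
          · have : NQ.post u (Sum.inl p) = (NN p.1).post ⟨u, h⟩ p.2 := by
              show (if h' : _ ∨ _ then (NN p.1).post ⟨u, h'⟩ p.2 else 0) = _
              rw [dif_pos h]
            rw [this] at hu
            have := (hτpost p.2 ⟨u, h⟩).mp hu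
            exact congrArg Subtype.val this
          · have : NQ.post u (Sum.inl p) = 0 := by
              show (if h' : _ ∨ _ then (NN p.1).post ⟨u, h'⟩ p.2 else 0) = _
              rw [dif_neg h]
            rw [this] at hu
            omega
        rw [f t h1, f t' h2]
      · exfalso
        have : NQ.post t (Sum.inr t0) = 0 := rfl
        rw [this] at h1
        omega
  -- transport to places indexed by `Fin`
  obtain eqv := Fintype.equivFin ((Σ e : AdjOf w, Fin (kk e)) ⊕ {t : L // parikh w t = 0})
  refine ⟨hw, _, transNet eqv NQ, fun i => MQ 0 (eqv.symm i), ?_, ?_⟩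
  · constructor
    · intro q' t t' h1 h2
      exact hwmg.1 (eqv.symm q') t t' h1 h2
    · intro q' t t' h1 h2
      exact hwmg.2 (eqv.symm q') t t' h1 h2
  · exact transNet_solves eqv NQ (MQ 0) (circLTS w hw) hiso
end

section
/- Let TS be the circular labelled transition system induced by a word w=w1…wk over alphabet T, with states s0,…,s(k−1). If the Parikh vector P(w) is prime, then every states separation problem of TS is solvable: for any two distinct states si≠sj there exists a region (R,B,F) of TS with R(si)≠R(sj). -/
section auxSep
variable {L : Type} [Fintype L] [DecidableEq L]

lemma list_sum_map_eq_sum_count (f : L → ℤ) (l : List L) :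
    (l.map f).sum = ∑ t, (l.count t : ℤ) * f t := by
  induction l with
  | nil => simp
  | cons a l ih =>
    simp only [List.map_cons, List.sum_cons, ih, List.count_cons]
    have h : ∀ t : L, (((l.count t + if (a == t) = true then 1 else 0 : ℕ) : ℤ)) * f t
        = (l.count t : ℤ) * f t + (if a = t then f t else 0) := by
      intro t; by_cases hat : a = t <;> simp [hat] <;> push_cast <;> ring
    rw [Finset.sum_congr rfl fun t _ => h t, Finset.sum_add_distrib,
      Finset.sum_ite_eq]
    simp [add_comm]

lemma sum_count_length (l : List L) : ∑ t, l.count t = l.length := by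
  have : ∑ t : L, Multiset.count t (l : Multiset L) = Multiset.card (l : Multiset L) :=
    Multiset.sum_count_eq_card (fun a _ => Finset.mem_univ a)
  simpa using this

lemma abs_list_sum (l : List ℤ) : |l.sum| ≤ (l.map (fun x => |x|)).sum := by
  induction l with
  | nil => simp
  | cons a l ih =>
    simp only [List.sum_cons, List.map_cons]
    calc |a + l.sum| ≤ |a| + |l.sum| := abs_add_le _ _
      _ ≤ |a| + (l.map (fun x => |x|)).sum := by linarith

end auxSep

section auxSep2
variable {L : Type} [Fintype L] [DecidableEq L]

lemma sep_lt (w : List L) (hw : 0 < w.length)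
    (hprime : Finset.univ.gcd (fun t => w.count t) = 1)
    (i j : Fin w.length) (hij : i.val < j.val) :
    ∃ (R : Fin w.length → ℕ) (B F : L → ℕ),
      isRegion (circLTS w hw) R B F ∧ R i < R j := by
  set u := (w.drop i.val).take (j.val - i.val) with hu
  set P : L → ℤ := fun t => (w.count t : ℤ) with hP
  set Q : L → ℤ := fun t => (u.count t : ℤ) with hQ
  set PP : ℤ := ∑ t, P t * P t with hPP
  set PQ : ℤ := ∑ t, P t * Q t with hPQ
  set QQ : ℤ := ∑ t, Q t * Q t with hQQ
  set e : L → ℤ := fun t => PP * Q t - PQ * P t with he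
  have hjk : j.val < w.length := j.isLt
  have hulen : u.length = j.val - i.val := by
    rw [hu, List.length_take, List.length_drop]
    omega
  have hsumP : ∑ t, P t = (w.length : ℤ) := by
    simp only [hP]
    rw [← Nat.cast_sum, sum_count_length]
  have hsumQ : ∑ t, Q t = ((j.val - i.val : ℕ) : ℤ) := by
    simp only [hQ]
    rw [← Nat.cast_sum, sum_count_length, hulen]
  have hkey1 : ∑ t, P t * e t = 0 := by
    have h : ∀ t, P t * e t = PP * (P t * Q t) - PQ * (P t * P t) := fun t => by
      simp only [he]; ring
    rw [Finset.sum_congr rfl fun t _ => h t, Finset.sum_sub_distrib,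
      ← Finset.mul_sum, ← Finset.mul_sum, ← hPQ, ← hPP]
    ring
  have hQe : ∑ t, Q t * e t = PP * QQ - PQ * PQ := by
    have h : ∀ t, Q t * e t = PP * (Q t * Q t) - PQ * (P t * Q t) := fun t => by
      simp only [he]; ring
    rw [Finset.sum_congr rfl fun t _ => h t, Finset.sum_sub_distrib,
      ← Finset.mul_sum, ← Finset.mul_sum, ← hPQ, ← hQQ]
  have hlag : ∑ s, ∑ t, (P s * Q t - P t * Q s)^2 = 2 * (PP * QQ - PQ * PQ) := by
    have h1 : ∀ s t : L, (P s * Q t - P t * Q s)^2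
        = (P s * P s) * (Q t * Q t) + (Q s * Q s) * (P t * P t)
          - 2 * ((P s * Q s) * (P t * Q t)) := fun s t => by ring
    calc ∑ s, ∑ t, (P s * Q t - P t * Q s)^2
        = ∑ s : L, ((P s * P s) * QQ + (Q s * Q s) * PP
            - 2 * ((P s * Q s) * PQ)) := by
          refine Finset.sum_congr rfl fun s _ => ?_
          rw [Finset.sum_congr rfl fun t _ => h1 s t]
          rw [Finset.sum_sub_distrib, Finset.sum_add_distrib,
            ← Finset.mul_sum, ← Finset.mul_sum, ← hQQ, ← hPP,
            ← Finset.mul_sum, ← Finset.mul_sum, ← hPQ]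
      _ = PP * QQ + QQ * PP - 2 * (PQ * PQ) := by
          rw [Finset.sum_sub_distrib, Finset.sum_add_distrib,
            ← Finset.sum_mul, ← Finset.sum_mul, ← hQQ, ← hPP,
            ← Finset.mul_sum, ← Finset.sum_mul, ← hPQ]
      _ = 2 * (PP * QQ - PQ * PQ) := by ring
  have hkey2 : 0 < ∑ t, Q t * e t := by
    rw [hQe]
    rcases lt_or_ge 0 (PP * QQ - PQ * PQ) with h | h
    · exact h
    · exfalso
      have hsqnn : ∀ s ∈ (Finset.univ : Finset L),
          0 ≤ ∑ t, (P s * Q t - P t * Q s)^2 :=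
        fun s _ => Finset.sum_nonneg fun t _ => sq_nonneg _
      have hsq : ∑ s, ∑ t, (P s * Q t - P t * Q s)^2 = 0 := by
        have h0 : 0 ≤ ∑ s, ∑ t, (P s * Q t - P t * Q s)^2 :=
          Finset.sum_nonneg hsqnn
        linarith [hlag]
      have hprop : ∀ s t : L, P s * Q t = P t * Q s := by
        intro s t
        have h2 := (Finset.sum_eq_zero_iff_of_nonneg hsqnn).mp hsq s (Finset.mem_univ s)
        have h3 := (Finset.sum_eq_zero_iff_of_nonneg
          (fun t _ => sq_nonneg (P s * Q t - P t * Q s))).mp h2 t (Finset.mem_univ t)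
        have := pow_eq_zero_iff (n := 2) (by norm_num) |>.mp h3
        linarith [this]
      have hnat : ∀ t : L, w.length * u.count t = w.count t * (j.val - i.val) := by
        intro t
        have h4 : ∑ s, P s * Q t = ∑ s, P t * Q s :=
          Finset.sum_congr rfl fun s _ => hprop s t
        rw [← Finset.sum_mul, ← Finset.mul_sum, hsumP, hsumQ] at h4
        have h5 : ((w.length * u.count t : ℕ) : ℤ) = ((w.count t * (j.val - i.val) : ℕ) : ℤ) := by
          push_cast
          simpa [hP, hQ, mul_comm] using h4
        exact_mod_cast h5
      have hdvd : ∀ t : L, w.length ∣ w.count t * (j.val - i.val) :=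
        fun t => ⟨u.count t, (hnat t).symm⟩
      have hkdvd : w.length ∣ (j.val - i.val) := by
        have h6 : w.length ∣ Finset.univ.gcd (fun t : L => w.count t * (j.val - i.val)) :=
          Finset.dvd_gcd fun t _ => hdvd t
        rwa [Finset.gcd_mul_right, hprime, one_mul, normalize_eq] at h6
      have h7 := Nat.le_of_dvd (by omega) hkdvd
      omega
  set S : ℕ → ℤ := fun m => ((w.take m).map e).sum with hS
  set E : ℤ := (w.map (fun a => |e a|)).sum with hE
  have hmapnn : ∀ x ∈ w.map (fun a => |e a|), (0:ℤ) ≤ x := by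
    intro x hx
    obtain ⟨b, _, rfl⟩ := List.mem_map.mp hx
    exact abs_nonneg _
  have hEnn : 0 ≤ E := List.sum_nonneg hmapnn
  have hmemE : ∀ a ∈ w, |e a| ≤ E :=
    fun a ha => List.single_le_sum hmapnn _ (List.mem_map_of_mem ha)
  have hSbound : ∀ m, |S m| ≤ E := by
    intro m
    have h1 : |S m| ≤ ((w.take m).map (fun a => |e a|)).sum := by
      have := abs_list_sum ((w.take m).map e)
      rwa [List.map_map] at this
    have h2 : ((w.take m).map (fun a => |e a|)).sum ≤ E := by
      have h3 : 0 ≤ ((w.drop m).map (fun a => |e a|)).sum :=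
        List.sum_nonneg (by
          intro x hx
          obtain ⟨b, _, rfl⟩ := List.mem_map.mp hx
          exact abs_nonneg _)
      have h4 : E = ((w.take m).map (fun a => |e a|)).sum
          + ((w.drop m).map (fun a => |e a|)).sum := by
        rw [hE]
        conv_lhs => rw [← List.take_append_drop m w]
        rw [List.map_append, List.sum_append]
      linarith
    linarith
  refine ⟨fun s => (2*E + S s.val).toNat, fun t => (e t).natAbs,
    fun t => (e t + |e t|).toNat, ?_, ?_⟩
  · rintro s t s' ⟨ht, hs'⟩
    subst ht
    have hmem : w.get s ∈ w := List.get_mem w s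
    have het : |e (w.get s)| ≤ E := hmemE _ hmem
    have hx : |e (w.get s)| ≤ 2*E + S s.val := by
      linarith [hSbound s.val, neg_abs_le (S s.val)]
    have hsucc : S (s.val + 1) = S s.val + e (w.get s) := by
      simp only [hS]
      rw [List.take_succ, List.getElem?_eq_getElem s.isLt, List.map_append,
        List.sum_append]
      simp [List.get_eq_getElem]
    have hstep : S s'.val = S s.val + e (w.get s) := by
      rcases Nat.lt_or_ge (s.val + 1) w.length with h | h
      · have hv : s'.val = s.val + 1 := by rw [hs', Nat.mod_eq_of_lt h]
        rw [hv, hsucc]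
      · have hk1 : s.val + 1 = w.length := by have := s.isLt; omega
        have h0 : s'.val = 0 := by rw [hs', hk1, Nat.mod_self]
        have hSk : S w.length = 0 := by
          simp only [hS]
          rw [List.take_length, list_sum_map_eq_sum_count]
          exact hkey1
        have hS0 : S 0 = 0 := by simp [hS]
        rw [hk1, hSk] at hsucc
        rw [h0, hS0]
        linarith
    have hxn : ((e (w.get s)).natAbs : ℤ) ≤ 2*E + S s.val := by
      rw [← Int.abs_eq_natAbs]; exact hx
    constructor
    · show (e (w.get s)).natAbs ≤ (2*E + S s.val).toNat
      omega
    · show (2*E + S s'.val).toNat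
        = (2*E + S s.val).toNat - (e (w.get s)).natAbs + (e (w.get s) + |e (w.get s)|).toNat
      rw [hstep]
      rcases abs_cases (e (w.get s)) with ⟨h1, h2⟩ | ⟨h1, h2⟩ <;> rw [h1] <;> omega
  · have hij2 : S j.val = S i.val + ∑ t, Q t * e t := by
      have htake : w.take j.val = w.take i.val ++ u := by
        rw [hu, ← List.take_add]
        congr 1
        omega
      simp only [hS]
      rw [htake, List.map_append, List.sum_append, list_sum_map_eq_sum_count e u]
    have hlt : 2*E + S i.val < 2*E + S j.val := by rw [hij2]; linarith
    have h1 : 0 ≤ 2*E + S i.val := by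
      linarith [hSbound i.val, neg_abs_le (S i.val)]
    show (2*E + S i.val).toNat < (2*E + S j.val).toNat
    omega

end auxSep2

/-- all SSPs of a prime circular LTS are solvable. -/
theorem stmt4 {L : Type} [Fintype L] [DecidableEq L] (w : List L) (hw : 0 < w.length)
    (hprime : primeVec (fun t => parikh w t)) :
    ∀ i j : Fin w.length, i ≠ j →
      ∃ (R : Fin w.length → ℕ) (B F : L → ℕ),
        isRegion (circLTS w hw) R B F ∧ R i ≠ R j := by
  intro i j hij
  have hvne : i.val ≠ j.val := fun hh => hij (Fin.ext hh)
  rcases Nat.lt_or_ge i.val j.val with h | h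
  · obtain ⟨R, B, F, hreg, hlt⟩ := sep_lt w hw hprime i j h
    exact ⟨R, B, F, hreg, Nat.ne_of_lt hlt⟩
  · have h' : j.val < i.val := by omega
    obtain ⟨R, B, F, hreg, hlt⟩ := sep_lt w hw hprime j i h'
    exact ⟨R, B, F, hreg, (Nat.ne_of_lt hlt).symm⟩
end

section
/- Suppose a word w over a finite alphabet T is cyclically solvable by a weighted marked graph. Let a≠b be labels such that the factor ab occurs circularly in w, beginning at states s_r and s_q of the circular LTS induced by w (possibly r=q, reading once around the circle). Set g=gcd(P(w)(a),P(w)(b)), m=P(w)(b)/g and n=P(w)(a)/g. Then for every state s_j lying on the circular path from s_r to s_q: if P_rj(a)≠0 then n·P_rj(b) < m·P_rj(a) + n, and if P_jq(a)≠0 then m·P_jq(a) < n·P_jq(b) + n. -/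
private lemma count_rot {L : Type} [DecidableEq L] (w : List L) (hk : 0 < w.length)
    (i0 : ℕ) (t : L) :
    ((List.range w.length).map (fun i => w.get ⟨(i0 + i) % w.length, Nat.mod_lt _ hk⟩)).count t
      = w.count t := by
  have heq : ((List.range w.length).map
      (fun i => w.get ⟨(i0 + i) % w.length, Nat.mod_lt _ hk⟩)) = w.rotate i0 := by
    apply List.ext_get
    · simp
    · intro n h1 h2
      simp only [List.get_eq_getElem, List.getElem_map, List.getElem_range, List.getElem_rotate]
      simp [Nat.add_comm i0 n]
  rw [heq]
  exact (List.rotate_perm w i0).count_eq t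

/-- necessary condition for cyclic WMG-solvability. -/
theorem stmt6 {L : Type} [Fintype L] [DecidableEq L] (w : List L) (hw : 0 < w.length)
    (hsolv : cyclicWMGSolvable w) (a b : L) (hab : a ≠ b)
    (r q : Fin w.length)
    (hra : w.get r = a) (hrb : w.get ⟨(r.val + 1) % w.length, Nat.mod_lt _ hw⟩ = b)
    (hqa : w.get q = a) (hqb : w.get ⟨(q.val + 1) % w.length, Nat.mod_lt _ hw⟩ = b)
    (j : Fin w.length)
    (hj : r = q ∨ (j.val + w.length - r.val) % w.length ≤ (q.val + w.length - r.val) % w.length) :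
    (segParikh w hw r j a ≠ 0 →
      (parikh w a / Nat.gcd (parikh w a) (parikh w b)) * segParikh w hw r j b <
        (parikh w b / Nat.gcd (parikh w a) (parikh w b)) * segParikh w hw r j a +
          parikh w a / Nat.gcd (parikh w a) (parikh w b)) ∧
    (segParikh w hw j q a ≠ 0 →
      (parikh w b / Nat.gcd (parikh w a) (parikh w b)) * segParikh w hw j q a <
        (parikh w a / Nat.gcd (parikh w a) (parikh w b)) * segParikh w hw j q b +
          parikh w a / Nat.gcd (parikh w a) (parikh w b)) := by
  classical
  obtain ⟨hw2, kp, N, M0, hwmg, ζ, hζ0, hζ⟩ := hsolv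
  -- the markings corresponding to the states of the circle
  set Mk : Fin w.length → Fin kp → ℕ :=
    fun i => ((ζ.symm i) : {M : Fin kp → ℕ // N.Reach M0 M}).val with hMkdef
  have hreachMk : ∀ i, N.Reach M0 (Mk i) := fun i => (ζ.symm i).property
  have htr' : ∀ (i : Fin w.length) (t : L) (i' : Fin w.length),
      N.step (Mk i) t (Mk i') ↔ (t = w.get i ∧ i'.val = (i.val + 1) % w.length) := by
    intro i t i'
    have h := hζ (ζ.symm i) t (ζ.symm i')
    rw [Equiv.apply_symm_apply, Equiv.apply_symm_apply] at h
    exact h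
  have hstep : ∀ i : Fin w.length,
      N.step (Mk i) (w.get i) (Mk ⟨(i.val + 1) % w.length, Nat.mod_lt _ hw⟩) :=
    fun i => (htr' i _ _).mpr ⟨rfl, rfl⟩
  have henab : ∀ (i : Fin w.length) (t : L), N.enabled (Mk i) t → t = w.get i := by
    intro i t ht
    have hreach' : N.Reach M0 (N.fire (Mk i) t) :=
      Relation.ReflTransGen.tail (hreachMk i) ⟨t, ht, rfl⟩
    have h2 := hζ (ζ.symm i) t ⟨N.fire (Mk i) t, hreach'⟩
    rw [Equiv.apply_symm_apply] at h2
    exact (h2.mp ⟨ht, rfl⟩).1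
  -- existence of a place from `a` to `b`, insufficiently marked at a state starting `ab`
  have hplace : ∀ i : Fin w.length, w.get i = a →
      w.get ⟨(i.val + 1) % w.length, Nat.mod_lt _ hw⟩ = b →
      ∃ p : Fin kp, (∀ t, t ≠ b → N.pre p t = 0) ∧ (∀ t, t ≠ a → N.post t p = 0) ∧
        Mk i p < N.pre p b := by
    intro i hia hib
    have hnen : ¬ N.enabled (Mk i) b := by
      intro h
      exact hab ((henab i b h).trans hia).symm
    simp only [PetriNet.enabled, not_forall, not_le] at hnen
    obtain ⟨p, hp⟩ := hnen
    have hen1 : N.enabled (Mk ⟨(i.val + 1) % w.length, Nat.mod_lt _ hw⟩) b := by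
      have h := (hstep ⟨(i.val + 1) % w.length, Nat.mod_lt _ hw⟩).1
      rwa [hib] at h
    have hf := (hstep i).2
    have hge : N.pre p b ≤ Mk i p - N.pre p (w.get i) + N.post (w.get i) p := by
      have h := hen1 p
      rw [hf] at h
      exact h
    rw [hia] at hge
    have hpost : 0 < N.post a p := by omega
    have hpreb : 0 < N.pre p b := by omega
    refine ⟨p, ?_, ?_, hp⟩
    · intro t htb
      by_contra h
      exact htb (hwmg.1 p t b (Nat.pos_of_ne_zero h) hpreb)
    · intro t hta
      by_contra h
      exact hta (hwmg.2 p t a (Nat.pos_of_ne_zero h) hpost)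
  -- evolution of the marking of such a place over one step
  have hstepP : ∀ p : Fin kp, (∀ t, t ≠ b → N.pre p t = 0) → (∀ t, t ≠ a → N.post t p = 0) →
      ∀ i : Fin w.length,
      (Mk ⟨(i.val + 1) % w.length, Nat.mod_lt _ hw⟩ p : ℤ) =
        (Mk i p : ℤ) + (if w.get i = a then (N.post a p : ℤ) else 0)
          - (if w.get i = b then (N.pre p b : ℤ) else 0) := by
    intro p h0 h1 i
    obtain ⟨hen, hf⟩ := hstep i
    have hle : N.pre p (w.get i) ≤ Mk i p := hen p
    have e1 : N.pre p (w.get i) = if w.get i = b then N.pre p b else 0 := by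
      by_cases h : w.get i = b
      · rw [h]; simp
      · rw [if_neg h, h0 _ h]
    have e2 : N.post (w.get i) p = if w.get i = a then N.post a p else 0 := by
      by_cases h : w.get i = a
      · rw [h]; simp
      · rw [if_neg h, h1 _ h]
    rw [hf]
    show ((Mk i p - N.pre p (w.get i) + N.post (w.get i) p : ℕ) : ℤ) = _
    rw [e1] at hle
    rw [e1, e2]
    by_cases ha' : w.get i = a
    · have hb' : w.get i ≠ b := by rw [ha']; exact hab
      simp only [ha', hb', if_true, if_false, ite_true, ite_false] at hle ⊢
      simp only [if_neg hab] at hle ⊢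
      omega
    · by_cases hb' : w.get i = b
      · simp only [if_pos hb', if_neg ha'] at hle ⊢
        omega
      · simp only [if_neg hb', if_neg ha'] at hle ⊢
        omega
  -- evolution over a segment
  have hseg : ∀ p : Fin kp, (∀ t, t ≠ b → N.pre p t = 0) → (∀ t, t ≠ a → N.post t p = 0) →
      ∀ (i0 : ℕ) (hi0 : i0 < w.length) (ℓ : ℕ),
      (Mk ⟨(i0 + ℓ) % w.length, Nat.mod_lt _ hw⟩ p : ℤ) =
        (Mk ⟨i0, hi0⟩ p : ℤ)
          + (N.post a p : ℤ) *
            (((List.range ℓ).map (fun i => w.get ⟨(i0 + i) % w.length, Nat.mod_lt _ hw⟩)).count a : ℤ)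
          - (N.pre p b : ℤ) *
            (((List.range ℓ).map (fun i => w.get ⟨(i0 + i) % w.length, Nat.mod_lt _ hw⟩)).count b : ℤ) := by
    intro p h0 h1 i0 hi0 ℓ
    induction ℓ with
    | zero =>
      have : (⟨(i0 + 0) % w.length, Nat.mod_lt _ hw⟩ : Fin w.length) = ⟨i0, hi0⟩ :=
        Fin.ext (by simp [Nat.mod_eq_of_lt hi0])
      rw [this]
      simp
    | succ ℓ ih =>
      have hrec := hstepP p h0 h1 ⟨(i0 + ℓ) % w.length, Nat.mod_lt _ hw⟩
      have hfin : (⟨((i0 + ℓ) % w.length + 1) % w.length, Nat.mod_lt _ hw⟩ : Fin w.length)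
          = ⟨(i0 + (ℓ + 1)) % w.length, Nat.mod_lt _ hw⟩ :=
        Fin.ext (show ((i0 + ℓ) % w.length + 1) % w.length = (i0 + (ℓ + 1)) % w.length by
          rw [Nat.mod_add_mod, Nat.add_assoc])
      rw [hfin] at hrec
      rw [hrec, ih]
      simp only [List.range_succ, List.map_append, List.count_append, List.map_cons,
        List.map_nil, List.count_singleton']
      by_cases h1a : w.get ⟨(i0 + ℓ) % w.length, Nat.mod_lt _ hw⟩ = a
      · have h1b : w.get ⟨(i0 + ℓ) % w.length, Nat.mod_lt _ hw⟩ ≠ b := by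
          rw [h1a]; exact hab
        simp only [h1a, h1b, if_pos rfl, if_neg hab, if_neg (Ne.symm hab)]
        push_cast
        ring
      · by_cases h1b : w.get ⟨(i0 + ℓ) % w.length, Nat.mod_lt _ hw⟩ = b
        · simp only [h1b, if_pos rfl, if_neg h1a, if_neg (fun h : b = a => hab h.symm)]
          push_cast
          ring
        · simp only [if_neg h1a, if_neg h1b]
          push_cast
          ring
  -- conservation around the cycle
  have hr' := r.isLt
  have hj' := j.isLt
  have hq' := q.isLt
  have hconsP : ∀ p : Fin kp, (∀ t, t ≠ b → N.pre p t = 0) → (∀ t, t ≠ a → N.post t p = 0) →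
      (N.post a p : ℤ) * (w.count a : ℤ) = (N.pre p b : ℤ) * (w.count b : ℤ) := by
    intro p h0 h1
    have h := hseg p h0 h1 r.val r.isLt w.length
    have hfin : (⟨(r.val + w.length) % w.length, Nat.mod_lt _ hw⟩ : Fin w.length)
        = ⟨r.val, r.isLt⟩ :=
      Fin.ext (show (r.val + w.length) % w.length = r.val by
        rw [Nat.add_mod_right]; exact Nat.mod_eq_of_lt r.isLt)
    rw [hfin, count_rot w hw r.val a, count_rot w hw r.val b] at h
    linarith
  obtain ⟨p, hpre0, hpost0, hMr⟩ := hplace r hra hrb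
  obtain ⟨p', hpre0', hpost0', hMq⟩ := hplace q hqa hqb
  have hA : 0 < w.count a := by
    rw [List.count_pos_iff]
    rw [← hqa]
    exact List.get_mem w q
  -- segment from r to j
  have hsegrj := hseg p hpre0 hpost0 r.val r.isLt ((j.val + w.length - r.val) % w.length)
  have hidx1 : (r.val + (j.val + w.length - r.val) % w.length) % w.length = j.val := by
    rw [Nat.add_mod_mod]
    have h : r.val + (j.val + w.length - r.val) = j.val + w.length := by omega
    rw [h, Nat.add_mod_right, Nat.mod_eq_of_lt j.isLt]
  have hfin1 : (⟨(r.val + (j.val + w.length - r.val) % w.length) % w.length,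
      Nat.mod_lt _ hw⟩ : Fin w.length) = j := Fin.ext hidx1
  rw [hfin1] at hsegrj
  have hca1 : ((List.range ((j.val + w.length - r.val) % w.length)).map
      (fun i => w.get ⟨(r.val + i) % w.length, Nat.mod_lt _ hw⟩)).count a
        = segParikh w hw r j a := rfl
  have hcb1 : ((List.range ((j.val + w.length - r.val) % w.length)).map
      (fun i => w.get ⟨(r.val + i) % w.length, Nat.mod_lt _ hw⟩)).count b
        = segParikh w hw r j b := rfl
  rw [hca1, hcb1] at hsegrj
  -- segment from j to q
  have hsegjq := hseg p' hpre0' hpost0' j.val j.isLt ((q.val + w.length - j.val) % w.length)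
  have hidx2 : (j.val + (q.val + w.length - j.val) % w.length) % w.length = q.val := by
    rw [Nat.add_mod_mod]
    have h : j.val + (q.val + w.length - j.val) = q.val + w.length := by omega
    rw [h, Nat.add_mod_right, Nat.mod_eq_of_lt q.isLt]
  have hfin2 : (⟨(j.val + (q.val + w.length - j.val) % w.length) % w.length,
      Nat.mod_lt _ hw⟩ : Fin w.length) = q := Fin.ext hidx2
  rw [hfin2] at hsegjq
  have hca2 : ((List.range ((q.val + w.length - j.val) % w.length)).map
      (fun i => w.get ⟨(j.val + i) % w.length, Nat.mod_lt _ hw⟩)).count a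
        = segParikh w hw j q a := rfl
  have hcb2 : ((List.range ((q.val + w.length - j.val) % w.length)).map
      (fun i => w.get ⟨(j.val + i) % w.length, Nat.mod_lt _ hw⟩)).count b
        = segParikh w hw j q b := rfl
  rw [hca2, hcb2] at hsegjq
  -- integer versions of the two inequalities
  have key1 : (w.count a) * segParikh w hw r j b
      < (w.count b) * segParikh w hw r j a + w.count a := by
    have hcons := hconsP p hpre0 hpost0
    have hMj : (0 : ℤ) ≤ (Mk j p : ℤ) := Int.natCast_nonneg _
    have hMr' : (Mk r p : ℤ) < (N.pre p b : ℤ) := by exact_mod_cast hMr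
    have hv : (0 : ℤ) < (N.pre p b : ℤ) := by
      exact_mod_cast lt_of_le_of_lt (Nat.zero_le _) hMr
    have hApos : (0 : ℤ) < (w.count a : ℤ) := by exact_mod_cast hA
    have hvb : (N.pre p b : ℤ) * (segParikh w hw r j b : ℤ)
        < (N.pre p b : ℤ) + (N.post a p : ℤ) * (segParikh w hw r j a : ℤ) := by
      have : (Mk ⟨r.val, r.isLt⟩ p : ℤ) = (Mk r p : ℤ) := rfl
      rw [this] at hsegrj
      linarith
    have hmul := mul_lt_mul_of_pos_left hvb hApos
    have hrw : (w.count a : ℤ) * ((N.pre p b : ℤ)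
          + (N.post a p : ℤ) * (segParikh w hw r j a : ℤ))
        = (N.pre p b : ℤ) * ((w.count a : ℤ)
          + (w.count b : ℤ) * (segParikh w hw r j a : ℤ)) := by
      linear_combination (segParikh w hw r j a : ℤ) * hcons
    have h2 : (N.pre p b : ℤ) * ((w.count a : ℤ) * (segParikh w hw r j b : ℤ))
        < (N.pre p b : ℤ) * ((w.count a : ℤ)
          + (w.count b : ℤ) * (segParikh w hw r j a : ℤ)) := by
      rw [show (N.pre p b : ℤ) * ((w.count a : ℤ) * (segParikh w hw r j b : ℤ))
          = (w.count a : ℤ) * ((N.pre p b : ℤ) * (segParikh w hw r j b : ℤ)) by ring, ← hrw]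
      exact hmul
    have h3 := lt_of_mul_lt_mul_left h2 hv.le
    exact_mod_cast (by linarith :
      (w.count a : ℤ) * (segParikh w hw r j b : ℤ)
        < (w.count b : ℤ) * (segParikh w hw r j a : ℤ) + (w.count a : ℤ))
  have key2 : (w.count b) * segParikh w hw j q a
      < (w.count a) * segParikh w hw j q b + w.count a := by
    have hcons := hconsP p' hpre0' hpost0'
    have hMj : (0 : ℤ) ≤ (Mk ⟨j.val, j.isLt⟩ p' : ℤ) := Int.natCast_nonneg _
    have hMq' : (Mk q p' : ℤ) < (N.pre p' b : ℤ) := by exact_mod_cast hMq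
    have hv : (0 : ℤ) < (N.pre p' b : ℤ) := by
      exact_mod_cast lt_of_le_of_lt (Nat.zero_le _) hMq
    have hApos : (0 : ℤ) < (w.count a : ℤ) := by exact_mod_cast hA
    have hub : (N.post a p' : ℤ) * (segParikh w hw j q a : ℤ)
        < (N.pre p' b : ℤ) * (1 + (segParikh w hw j q b : ℤ)) := by
      linarith [hsegjq, hMj, hMq']
    have hmul := mul_lt_mul_of_pos_left hub hApos
    have hrw : (w.count a : ℤ) * ((N.post a p' : ℤ) * (segParikh w hw j q a : ℤ))
        = (N.pre p' b : ℤ) * ((w.count b : ℤ) * (segParikh w hw j q a : ℤ)) := by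
      linear_combination (segParikh w hw j q a : ℤ) * hcons
    have h2 : (N.pre p' b : ℤ) * ((w.count b : ℤ) * (segParikh w hw j q a : ℤ))
        < (N.pre p' b : ℤ) * ((w.count a : ℤ) * (1 + (segParikh w hw j q b : ℤ))) := by
      rw [← hrw, show (N.pre p' b : ℤ) * ((w.count a : ℤ) * (1 + (segParikh w hw j q b : ℤ)))
          = (w.count a : ℤ) * ((N.pre p' b : ℤ) * (1 + (segParikh w hw j q b : ℤ))) by ring]
      exact hmul
    have h3 := lt_of_mul_lt_mul_left h2 hv.le
    exact_mod_cast (by linarith :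
      (w.count b : ℤ) * (segParikh w hw j q a : ℤ)
        < (w.count a : ℤ) * (segParikh w hw j q b : ℤ) + (w.count a : ℤ))
  -- descend to the reduced coefficients
  simp only [parikh]
  have hgdvd1 : Nat.gcd (w.count a) (w.count b) ∣ w.count a := Nat.gcd_dvd_left _ _
  have hgdvd2 : Nat.gcd (w.count a) (w.count b) ∣ w.count b := Nat.gcd_dvd_right _ _
  have ea : Nat.gcd (w.count a) (w.count b) * (w.count a / Nat.gcd (w.count a) (w.count b))
      = w.count a := Nat.mul_div_cancel' hgdvd1
  have eb : Nat.gcd (w.count a) (w.count b) * (w.count b / Nat.gcd (w.count a) (w.count b))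
      = w.count b := Nat.mul_div_cancel' hgdvd2
  constructor
  · intro _
    apply Nat.lt_of_mul_lt_mul_left (a := Nat.gcd (w.count a) (w.count b))
    have e1 : Nat.gcd (w.count a) (w.count b) *
        ((w.count a / Nat.gcd (w.count a) (w.count b)) * segParikh w hw r j b)
        = w.count a * segParikh w hw r j b := by rw [← mul_assoc, ea]
    have e2 : Nat.gcd (w.count a) (w.count b) *
        ((w.count b / Nat.gcd (w.count a) (w.count b)) * segParikh w hw r j a
          + w.count a / Nat.gcd (w.count a) (w.count b))
        = w.count b * segParikh w hw r j a + w.count a := by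
      rw [Nat.mul_add, ← mul_assoc, eb, ea]
    rw [e1, e2]
    exact key1
  · intro _
    apply Nat.lt_of_mul_lt_mul_left (a := Nat.gcd (w.count a) (w.count b))
    have e1 : Nat.gcd (w.count a) (w.count b) *
        ((w.count b / Nat.gcd (w.count a) (w.count b)) * segParikh w hw j q a)
        = w.count b * segParikh w hw j q a := by rw [← mul_assoc, eb]
    have e2 : Nat.gcd (w.count a) (w.count b) *
        ((w.count a / Nat.gcd (w.count a) (w.count b)) * segParikh w hw j q b
          + w.count a / Nat.gcd (w.count a) (w.count b))
        = w.count a * segParikh w hw j q b + w.count a := by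
      rw [Nat.mul_add, ← mul_assoc, ea]
    rw [e1, e2]
    exact key2
end
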